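/- arXiv:2205.08879 — 6 statements merged into one kernel-verified Lean document; each statement's English description precedes it below -/
import Mathlib

section
/- Let ([P*],[u*]) be an optimal process for the free-payments control problem with η∈[0,1) and γ>0. If the remaining budget bounds are constant from some period k on, i.e. F(k)=F(k+1)=…=F(T−1) for some k∈{0,…,T−2}, then there are no control actions after period k: u*(t)=0 for all t∈{k+1,…,T−1}. -/
open Finset

noncomputable section

/-- Residual liability matrices: `P̄(0) = P̄`, `P̄(t+1) = α (P̄(t) - P(t))`. -/
def resLiab {n : ℕ} (α : ℝ) (Pbar : Matrix (Fin n) (Fin n) ℝ)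
    (P : ℕ → Matrix (Fin n) (Fin n) ℝ) : ℕ → Matrix (Fin n) (Fin n) ℝ
  | 0 => Pbar
  | t + 1 => fun i j => α * (resLiab α Pbar P t i j - P t i j)

/-- Net worths: `w(0) = 0`, `w(t+1) = w(t) + c(t) + P(t)ᵀ1 - P(t)1`. -/
def netWorth {n : ℕ} (c : ℕ → Fin n → ℝ)
    (P : ℕ → Matrix (Fin n) (Fin n) ℝ) : ℕ → Fin n → ℝ
  | 0 => fun _ => 0
  | t + 1 => fun i => netWorth c P t i + c t i + (∑ j, P t j i) - (∑ j, P t i j)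

/-- Cumulative injected cash `B(t) = Σ_{k=0}^{t} 1ᵀ u(k)`. -/
def budget {n : ℕ} (u : ℕ → Fin n → ℝ) (t : ℕ) : ℝ :=
  ∑ k ∈ range (t + 1), ∑ i, u k i

/-- Feasibility of a process `([P],[u])` for the free-payments control problem. -/
def FeasibleFree {n : ℕ} (T : ℕ) (α : ℝ) (Pbar : Matrix (Fin n) (Fin n) ℝ)
    (e : ℕ → Fin n → ℝ) (F : ℕ → ℝ)
    (P : ℕ → Matrix (Fin n) (Fin n) ℝ) (u : ℕ → Fin n → ℝ) : Prop :=
  ∀ t, t < T →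
    (∀ i j, 0 ≤ P t i j) ∧ (∀ i, 0 ≤ u t i) ∧
    (∀ i j, P t i j ≤ resLiab α Pbar P t i j) ∧
    (∀ i, 0 ≤ netWorth (fun s i => e s i + u s i) P (t + 1) i) ∧
    budget u t ≤ F t

/-- Cost `J([P],[u])` of the free-payments control problem. -/
def costFree {n : ℕ} (T : ℕ) (α η γ : ℝ) (Pbar : Matrix (Fin n) (Fin n) ℝ)
    (P : ℕ → Matrix (Fin n) (Fin n) ℝ) (u : ℕ → Fin n → ℝ) : ℝ :=
  (1 - η) * ∑ t ∈ range T, ∑ i, ∑ j, (resLiab α Pbar P t i j - P t i j)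
    + η * ∑ i, ∑ j, resLiab α Pbar P T i j
    + γ * budget u (T - 1)

/-- Optimality for the free-payments control problem. -/
def OptimalFree {n : ℕ} (T : ℕ) (α η γ : ℝ) (Pbar : Matrix (Fin n) (Fin n) ℝ)
    (e : ℕ → Fin n → ℝ) (F : ℕ → ℝ)
    (P : ℕ → Matrix (Fin n) (Fin n) ℝ) (u : ℕ → Fin n → ℝ) : Prop :=
  FeasibleFree T α Pbar e F P u ∧
  ∀ P' u', FeasibleFree T α Pbar e F P' u' →
    costFree T α η γ Pbar P u ≤ costFree T α η γ Pbar P' u'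

/- ### Auxiliary lemmas -/

lemma netWorth_succ' {n : ℕ} (c : ℕ → Fin n → ℝ) (P : ℕ → Matrix (Fin n) (Fin n) ℝ)
    (t : ℕ) (i : Fin n) :
    netWorth c P (t + 1) i
      = netWorth c P t i + c t i + (∑ j, P t j i) - (∑ j, P t i j) := rfl

lemma resLiab_succ' {n : ℕ} (α : ℝ) (Pbar : Matrix (Fin n) (Fin n) ℝ)
    (P : ℕ → Matrix (Fin n) (Fin n) ℝ) (t : ℕ) (i j : Fin n) :
    resLiab α Pbar P (t + 1) i j = α * (resLiab α Pbar P t i j - P t i j) := rfl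

lemma resLiab_zero' {n : ℕ} (α : ℝ) (Pbar : Matrix (Fin n) (Fin n) ℝ)
    (P : ℕ → Matrix (Fin n) (Fin n) ℝ) (i j : Fin n) :
    resLiab α Pbar P 0 i j = Pbar i j := rfl

lemma sum_if_left' {n : ℕ} (j0 : Fin n) (c : Prop) [Decidable c] (x : ℝ) :
    (∑ j : Fin n, if c ∧ j = j0 then x else 0) = if c then x else 0 := by
  by_cases h : c <;> simp [h]

lemma sum_if_right' {n : ℕ} (j0 : Fin n) (c : Prop) [Decidable c] (x : ℝ) :
    (∑ j : Fin n, if j = j0 ∧ c then x else 0) = if c then x else 0 := by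
  by_cases h : c <;> simp [h]

lemma sum_if_single' {n : ℕ} (i0 : Fin n) (x : ℝ) :
    (∑ i : Fin n, if i = i0 then x else 0) = x := by simp

lemma ite_lt_succ' (x s : ℕ) (v : ℝ) :
    (if x < s + 1 then v else 0) = (if x < s then v else 0) + (if s = x then v else 0) := by
  by_cases h1 : x < s
  · rw [if_pos (by omega), if_pos h1, if_neg (by omega)]; ring
  · by_cases h2 : s = x
    · rw [if_pos (by omega), if_neg h1, if_pos h2]; ring
    · rw [if_neg (by omega), if_neg h1, if_neg h2]; ring

set_option maxHeartbeats 4000000 in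
theorem stmt8_constant_budget_free (n T : ℕ) (hn : 1 ≤ n) (hT : 1 ≤ T)
    (α : ℝ) (hα : 1 ≤ α)
    (Pbar : Matrix (Fin n) (Fin n) ℝ)
    (hPbar : ∀ i j, 0 ≤ Pbar i j) (hPdiag : ∀ i, Pbar i i = 0)
    (e : ℕ → Fin n → ℝ) (he : ∀ t, t < T → ∀ i, 0 ≤ e t i)
    (F : ℕ → ℝ) (hF : ∀ t, 0 ≤ F t) (hFmono : ∀ s t, s ≤ t → F s ≤ F t)
    (η γ : ℝ) (hη0 : 0 ≤ η) (hη1 : η < 1) (hγ : 0 < γ)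
    (Pstar : ℕ → Matrix (Fin n) (Fin n) ℝ) (ustar : ℕ → Fin n → ℝ)
    (hopt : OptimalFree T α η γ Pbar e F Pstar ustar) :
    ∀ k, k + 2 ≤ T → (∀ t, k ≤ t → t < T → F t = F k) →
      ∀ t, k < t → t < T → ∀ i, ustar t i = 0 := by
  classical
  obtain ⟨hfeas, hmin⟩ := hopt
  intro k hk2 hFc t0 hkt0 ht0T i0
  by_contra hne
  have hαpos : (0:ℝ) < α := lt_of_lt_of_le one_pos hα
  have h1η : (0:ℝ) < 1 - η := by linarith
  have hPnn : ∀ t, t < T → ∀ i j, 0 ≤ Pstar t i j := fun t ht => (hfeas t ht).1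
  have hunn : ∀ t, t < T → ∀ i, 0 ≤ ustar t i := fun t ht => (hfeas t ht).2.1
  have hPle : ∀ t, t < T → ∀ i j, Pstar t i j ≤ resLiab α Pbar Pstar t i j :=
    fun t ht => (hfeas t ht).2.2.1
  have hbud : ∀ t, t < T → budget ustar t ≤ F t := fun t ht => (hfeas t ht).2.2.2.2
  have hu_pos : 0 < ustar t0 i0 := lt_of_le_of_ne (hunn t0 ht0T i0) (Ne.symm hne)
  set w : ℕ → Fin n → ℝ := netWorth (fun s i => e s i + ustar s i) Pstar with hwdef
  have hwsucc : ∀ s i, w (s+1) i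
      = w s i + (e s i + ustar s i) + (∑ j, Pstar s j i) - (∑ j, Pstar s i j) :=
    fun s i => rfl
  have hw0 : ∀ s, 0 < s → s ≤ T → ∀ i, 0 ≤ w s i := by
    intro s hs hsT i
    obtain ⟨t, rfl⟩ := Nat.exists_eq_succ_of_ne_zero (Nat.pos_iff_ne_zero.mp hs)
    exact (hfeas t (by omega)).2.2.2.1 i
  clear_value w
  by_cases hA : ∀ s, t0 < s → s ≤ T → 0 < w s i0
  · -- Case A: slack everywhere after t0; just reduce the injection.
    set SA : Finset ℝ := insert (ustar t0 i0) ((Finset.Icc (t0+1) T).image fun s => w s i0)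
      with hSA
    have hSAne : SA.Nonempty := ⟨_, Finset.mem_insert_self _ _⟩
    set ε := SA.min' hSAne with hεdef
    have hεpos : 0 < ε := by
      rw [hεdef]
      apply (Finset.lt_min'_iff _ _).2
      intro y hy
      rcases Finset.mem_insert.1 hy with h | h
      · exact h ▸ hu_pos
      · obtain ⟨s, hs, rfl⟩ := Finset.mem_image.1 h
        rw [Finset.mem_Icc] at hs
        exact hA s (by omega) hs.2
    have hεu : ε ≤ ustar t0 i0 := Finset.min'_le _ _ (Finset.mem_insert_self _ _)
    have hεw : ∀ s, t0 < s → s ≤ T → ε ≤ w s i0 := by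
      intro s h1 h2
      exact Finset.min'_le _ _ (Finset.mem_insert_of_mem
        (Finset.mem_image_of_mem _ (Finset.mem_Icc.2 ⟨by omega, h2⟩)))
    clear_value ε
    set u' : ℕ → Fin n → ℝ := fun t i => ustar t i - (if t = t0 ∧ i = i0 then ε else 0)
      with hu'
    have hu'app : ∀ t i, u' t i = ustar t i - (if t = t0 ∧ i = i0 then ε else 0) :=
      fun t i => rfl
    have hworthA : ∀ s, ∀ i, netWorth (fun s i => e s i + u' s i) Pstar s i
        = w s i - (if i = i0 then (if t0 < s then ε else 0) else 0) := by
      intro s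
      induction s with
      | zero => intro i; simp [hwdef, netWorth]
      | succ s ih =>
        intro i
        have hL : netWorth (fun s i => e s i + u' s i) Pstar (s+1) i
            = netWorth (fun s i => e s i + u' s i) Pstar s i + (e s i + u' s i)
              + (∑ j, Pstar s j i) - (∑ j, Pstar s i j) := rfl
        rw [hL, ih i, hwsucc s i, hu'app s i]
        by_cases hi : i = i0
        · subst hi
          simp only [eq_self_iff_true, and_true, if_true]
          rw [ite_lt_succ' t0 s ε]
          ring
        · simp only [eq_false hi, and_false, if_false]
          ring
    have hbudA : ∀ t, budget u' t = budget ustar t - (if t0 ≤ t then ε else 0) := by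
      intro t
      simp only [budget, hu'app]
      have h2 : ∀ τ, (∑ i, (ustar τ i - if τ = t0 ∧ i = i0 then ε else 0))
          = (∑ i, ustar τ i) - (if τ = t0 then ε else 0) := by
        intro τ
        rw [Finset.sum_sub_distrib, sum_if_left' i0 (τ = t0) ε]
      rw [Finset.sum_congr rfl fun τ _ => h2 τ, Finset.sum_sub_distrib,
        Finset.sum_ite_eq' (range (t+1)) t0 fun _ => ε]
      simp [Finset.mem_range, Nat.lt_succ_iff]
    have hfeasA : FeasibleFree T α Pbar e F Pstar u' := by
      intro t ht
      obtain ⟨h1, h2, h3, h4, h5⟩ := hfeas t ht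
      refine ⟨h1, ?_, h3, ?_, ?_⟩
      · intro i
        rw [hu'app]
        by_cases hc : t = t0 ∧ i = i0
        · rw [if_pos hc]
          rcases hc with ⟨rfl, rfl⟩
          linarith [hεu]
        · rw [if_neg hc, sub_zero]
          exact h2 i
      · intro i
        rw [hworthA (t+1) i]
        by_cases hi : i = i0
        · rw [if_pos hi]
          by_cases hlt : t0 < t + 1
          · rw [if_pos hlt]
            have := hεw (t+1) hlt (by omega)
            rw [hi]
            linarith
          · rw [if_neg hlt, sub_zero]
            exact hw0 (t+1) (by omega) (by omega) i
        · rw [if_neg hi, sub_zero]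
          exact hw0 (t+1) (by omega) (by omega) i
      · rw [hbudA t]
        by_cases hc : t0 ≤ t
        · rw [if_pos hc]; linarith
        · rw [if_neg hc, sub_zero]; exact h5
    have hcostA : costFree T α η γ Pbar Pstar u'
        = costFree T α η γ Pbar Pstar ustar - γ * ε := by
      simp only [costFree]
      rw [hbudA (T-1), if_pos (show t0 ≤ T - 1 by omega)]
      ring
    have hcontra := hmin Pstar u' hfeasA
    rw [hcostA] at hcontra
    nlinarith [mul_pos hγ hεpos]
  · -- Case B: the net worth of i0 hits zero at some time s0 after t0.
    push_neg at hA
    obtain ⟨sb, hsb1, hsb2, hsb3⟩ := hA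
    have hQ : ∃ s, t0 < s ∧ s ≤ T ∧ w s i0 ≤ 0 := ⟨sb, hsb1, hsb2, hsb3⟩
    have hs0spec := Nat.find_spec hQ
    have hs0min : ∀ s, s < Nat.find hQ → ¬(t0 < s ∧ s ≤ T ∧ w s i0 ≤ 0) :=
      fun s hs => Nat.find_min hQ hs
    set s0 := Nat.find hQ with hs0def
    obtain ⟨hs0a, hs0b, hs0c⟩ := hs0spec
    have hwpos : ∀ s, t0 < s → s < s0 → 0 < w s i0 := by
      intro s hgt hlt
      by_contra hc
      exact (hs0min s hlt) ⟨hgt, by omega, not_lt.1 hc⟩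
    have hw_s0 : w s0 i0 = 0 := le_antisymm hs0c (hw0 s0 (by omega) hs0b i0)
    set s1 := s0 - 1 with hs1def
    have hs1succ : s1 + 1 = s0 := by omega
    have ht0s1 : t0 ≤ s1 := by omega
    have hs1T : s1 < T := by omega
    have hks1 : k < s1 := by omega
    clear_value s0 s1
    -- i0 makes a positive payment at time s1
    have houtpos : 0 < ∑ j, Pstar s1 i0 j := by
      have hnet := hwsucc s1 i0
      rw [hs1succ, hw_s0] at hnet
      have hin : 0 ≤ ∑ j, Pstar s1 j i0 :=
        Finset.sum_nonneg fun j _ => hPnn s1 hs1T j i0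
      have he1 : 0 ≤ e s1 i0 := he s1 hs1T i0
      have hu1 : 0 ≤ ustar s1 i0 := hunn s1 hs1T i0
      rcases eq_or_lt_of_le ht0s1 with heq | hlt
      · have hupos : 0 < ustar s1 i0 := heq ▸ hu_pos
        have hw1 : 0 ≤ w s1 i0 := hw0 s1 (by omega) (by omega) i0
        linarith
      · have hw1 : 0 < w s1 i0 := hwpos s1 hlt (by omega)
        linarith
    obtain ⟨j0, hPj0⟩ : ∃ j, 0 < Pstar s1 i0 j := by
      by_contra hc
      push_neg at hc
      have := Finset.sum_nonpos fun j (_ : j ∈ (univ : Finset (Fin n))) => hc j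
      linarith
    have hdiagP : ∀ t, t < T → resLiab α Pbar Pstar t i0 i0 = 0 ∧ Pstar t i0 i0 = 0 := by
      intro t
      induction t with
      | zero =>
        intro ht
        have hres0 : resLiab α Pbar Pstar 0 i0 i0 = 0 := hPdiag i0
        exact ⟨hres0, le_antisymm (hres0 ▸ hPle 0 ht i0 i0) (hPnn 0 ht i0 i0)⟩
      | succ t ih =>
        intro ht
        obtain ⟨hR, hP⟩ := ih (by omega)
        have hres1 : resLiab α Pbar Pstar (t+1) i0 i0 = 0 := by
          rw [resLiab_succ', hR, hP]; ring
        exact ⟨hres1, le_antisymm (hres1 ▸ hPle (t+1) ht i0 i0) (hPnn (t+1) ht i0 i0)⟩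
    have hne01 : ¬ (i0 = j0) := by
      intro h
      rw [← h] at hPj0
      rw [(hdiagP s1 hs1T).2] at hPj0
      exact lt_irrefl 0 hPj0
    have hne10 : ¬ (j0 = i0) := fun h => hne01 h.symm
    -- choose ε
    set SB : Finset ℝ := insert (ustar t0 i0)
      (insert (Pstar s1 i0 j0) ((Finset.Ioc t0 s1).image fun s => w s i0)) with hSB
    have hSBne : SB.Nonempty := ⟨_, Finset.mem_insert_self _ _⟩
    set ε := SB.min' hSBne with hεdef
    have hεpos : 0 < ε := by
      rw [hεdef]
      apply (Finset.lt_min'_iff _ _).2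
      intro y hy
      rcases Finset.mem_insert.1 hy with h | hy
      · exact h ▸ hu_pos
      rcases Finset.mem_insert.1 hy with h | hy
      · exact h ▸ hPj0
      obtain ⟨s, hs, rfl⟩ := Finset.mem_image.1 hy
      rw [Finset.mem_Ioc] at hs
      exact hwpos s hs.1 (by omega)
    have hεu : ε ≤ ustar t0 i0 := Finset.min'_le _ _ (Finset.mem_insert_self _ _)
    have hεP : ε ≤ Pstar s1 i0 j0 :=
      Finset.min'_le _ _ (Finset.mem_insert_of_mem (Finset.mem_insert_self _ _))
    have hεw : ∀ s, t0 < s → s ≤ s1 → ε ≤ w s i0 := fun s hgt hle =>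
      Finset.min'_le _ _ (Finset.mem_insert_of_mem (Finset.mem_insert_of_mem
        (Finset.mem_image_of_mem _ (Finset.mem_Ioc.2 ⟨hgt, hle⟩))))
    set a := ε / α ^ (s1 - k) with hadef
    have hpow : (0:ℝ) < α ^ (s1 - k) := pow_pos hαpos _
    have hpow1 : (1:ℝ) ≤ α ^ (s1 - k) := one_le_pow₀ hα
    have hapos : 0 < a := div_pos hεpos hpow
    have hamul : a * α ^ (s1 - k) = ε := div_mul_cancel₀ ε (ne_of_gt hpow)
    have hale : a ≤ ε := by
      rw [hadef]
      exact div_le_self hεpos.le hpow1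
    clear_value ε a
    -- growth of residual liabilities (entrywise, at rate at most α)
    have hgrow : ∀ m t, m ≤ t → t ≤ s1 →
        resLiab α Pbar Pstar t i0 j0 ≤ α ^ (t - m) * resLiab α Pbar Pstar m i0 j0 := by
      intro m t
      induction t with
      | zero =>
        intro h1 _
        have : m = 0 := by omega
        subst this
        simp
      | succ t ih =>
        intro h1 h2
        rcases Nat.eq_or_lt_of_le h1 with heq | hlt
        · rw [← heq]
          simp
        · have h3 := ih (by omega) (by omega)
          have hPt : 0 ≤ Pstar t i0 j0 := hPnn t (by omega) i0 j0
          calc resLiab α Pbar Pstar (t+1) i0 j0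
              = α * (resLiab α Pbar Pstar t i0 j0 - Pstar t i0 j0) := resLiab_succ' _ _ _ _ _ _
            _ ≤ α * resLiab α Pbar Pstar t i0 j0 := by nlinarith
            _ ≤ α * (α ^ (t - m) * resLiab α Pbar Pstar m i0 j0) := by nlinarith
            _ = α ^ (t + 1 - m) * resLiab α Pbar Pstar m i0 j0 := by
                rw [show t + 1 - m = (t - m) + 1 by omega, pow_succ]; ring
    -- slack estimate: the payment at s1 bounds (the α-discounted) slack at earlier times
    have hslack : ∀ t, k ≤ t → t < s1 →
        Pstar s1 i0 j0 ≤ α ^ (s1 - t) * (resLiab α Pbar Pstar t i0 j0 - Pstar t i0 j0) := by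
      intro t h1 h2
      have e1 : resLiab α Pbar Pstar (t+1) i0 j0
          = α * (resLiab α Pbar Pstar t i0 j0 - Pstar t i0 j0) := resLiab_succ' _ _ _ _ _ _
      have h3 := hgrow (t+1) s1 (by omega) le_rfl
      have h4 : Pstar s1 i0 j0 ≤ resLiab α Pbar Pstar s1 i0 j0 := hPle s1 hs1T i0 j0
      calc Pstar s1 i0 j0
          ≤ α ^ (s1 - (t+1)) * (α * (resLiab α Pbar Pstar t i0 j0 - Pstar t i0 j0)) := by
            rw [← e1]; exact h4.trans h3
        _ = α ^ (s1 - t) * (resLiab α Pbar Pstar t i0 j0 - Pstar t i0 j0) := by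
            rw [show s1 - t = (s1 - (t+1)) + 1 by omega, pow_succ]; ring
    -- the perturbed process
    set P' : ℕ → Matrix (Fin n) (Fin n) ℝ := fun t i j => Pstar t i j +
      (if i = i0 ∧ j = j0 then (if t = k then a else 0) - (if t = s1 then ε else 0) else 0)
      with hP'
    have hP'app : ∀ t i j, P' t i j = Pstar t i j +
        (if i = i0 ∧ j = j0 then (if t = k then a else 0) - (if t = s1 then ε else 0) else 0) :=
      fun t i j => rfl
    set u' : ℕ → Fin n → ℝ := fun t i => ustar t i +
      ((if t = k ∧ i = i0 then a else 0) - (if t = t0 ∧ i = i0 then ε else 0)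
        + ((if t = s1 ∧ i = j0 then ε else 0) - (if t = s1 ∧ i = j0 then a else 0)))
      with hu'
    have hu'app : ∀ t i, u' t i = ustar t i +
        ((if t = k ∧ i = i0 then a else 0) - (if t = t0 ∧ i = i0 then ε else 0)
          + ((if t = s1 ∧ i = j0 then ε else 0) - (if t = s1 ∧ i = j0 then a else 0))) :=
      fun t i => rfl
    set D : ℕ → ℝ := fun t => if t ≤ k then 0 else if t ≤ s1 then α ^ (t - k) * a else 0
      with hD
    have hDapp : ∀ t, D t = if t ≤ k then 0 else if t ≤ s1 then α ^ (t - k) * a else 0 :=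
      fun t => rfl
    have hDsucc : ∀ t, D (t+1)
        = α * (D t + ((if t = k then a else 0) - (if t = s1 then ε else 0))) := by
      intro t
      rcases Nat.lt_trichotomy t k with h | h | h
      · have e1 : D t = 0 := by rw [hDapp, if_pos (by omega : t ≤ k)]
        have e2 : D (t+1) = 0 := by rw [hDapp, if_pos (by omega : t + 1 ≤ k)]
        rw [e1, e2, if_neg (by omega : ¬ t = k), if_neg (by omega : ¬ t = s1)]; ring
      · have e1 : D t = 0 := by rw [hDapp, if_pos (by omega : t ≤ k)]
        have e2 : D (t+1) = α * a := by
          rw [hDapp, if_neg (by omega : ¬ t + 1 ≤ k), if_pos (by omega : t + 1 ≤ s1),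
            show t + 1 - k = 1 by omega, pow_one]
        rw [e1, e2, if_pos h, if_neg (by omega : ¬ t = s1)]; ring
      · rcases Nat.lt_trichotomy t s1 with h2 | h2 | h2
        · have e1 : D t = α ^ (t - k) * a := by
            rw [hDapp, if_neg (by omega : ¬ t ≤ k), if_pos (by omega : t ≤ s1)]
          have e2 : D (t+1) = α ^ (t + 1 - k) * a := by
            rw [hDapp, if_neg (by omega : ¬ t + 1 ≤ k), if_pos (by omega : t + 1 ≤ s1)]
          rw [e1, e2, if_neg (by omega : ¬ t = k), if_neg (by omega : ¬ t = s1),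
            show t + 1 - k = (t - k) + 1 by omega, pow_succ]
          ring
        · have e1 : D t = ε := by
            rw [hDapp, if_neg (by omega : ¬ t ≤ k), if_pos (by omega : t ≤ s1), h2, mul_comm]
            exact hamul
          have e2 : D (t+1) = 0 := by
            rw [hDapp, if_neg (by omega : ¬ t + 1 ≤ k), if_neg (by omega : ¬ t + 1 ≤ s1)]
          rw [e1, e2, if_neg (by omega : ¬ t = k), if_pos h2]; ring
        · have e1 : D t = 0 := by
            rw [hDapp, if_neg (by omega : ¬ t ≤ k), if_neg (by omega : ¬ t ≤ s1)]
          have e2 : D (t+1) = 0 := by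
            rw [hDapp, if_neg (by omega : ¬ t + 1 ≤ k), if_neg (by omega : ¬ t + 1 ≤ s1)]
          rw [e1, e2, if_neg (by omega : ¬ t = k), if_neg (by omega : ¬ t = s1)]; ring
    have hres : ∀ t, ∀ i j, resLiab α Pbar P' t i j
        = resLiab α Pbar Pstar t i j - (if i = i0 ∧ j = j0 then D t else 0) := by
      intro t
      induction t with
      | zero =>
        intro i j
        have h0 : D 0 = 0 := by rw [hDapp, if_pos (Nat.zero_le k)]
        rw [resLiab_zero', resLiab_zero', h0]
        simp
      | succ t ih =>
        intro i j
        rw [resLiab_succ', resLiab_succ', ih i j, hP'app t i j]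
        by_cases hij : i = i0 ∧ j = j0
        · rw [if_pos hij, if_pos hij, if_pos hij, hDsucc t]; ring
        · rw [if_neg hij, if_neg hij, if_neg hij]; ring
    have hrow : ∀ s i, (∑ j, P' s i j) = (∑ j, Pstar s i j)
        + (if i = i0 then (if s = k then a else 0) - (if s = s1 then ε else 0) else 0) := by
      intro s i
      simp only [hP'app]
      rw [Finset.sum_add_distrib, sum_if_left' j0 (i = i0) _]
    have hcol : ∀ s i, (∑ j, P' s j i) = (∑ j, Pstar s j i)
        + (if i = j0 then (if s = k then a else 0) - (if s = s1 then ε else 0) else 0) := by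
      intro s i
      simp only [hP'app]
      rw [Finset.sum_add_distrib]
      congr 1
      have : ∀ j : Fin n, (if j = i0 ∧ i = j0 then (if s = k then a else 0)
          - (if s = s1 then ε else 0) else 0)
          = (if j = i0 ∧ i = j0 then (if s = k then a else 0) - (if s = s1 then ε else 0)
            else 0) := fun _ => rfl
      rw [sum_if_right' i0 (i = j0) _]
    have hworth : ∀ s, ∀ i, netWorth (fun s i => e s i + u' s i) P' s i
        = w s i
          + (if i = i0 then (if s1 < s then ε else 0) - (if t0 < s then ε else 0) else 0)
          + (if i = j0 then (if k < s then a else 0) - (if s1 < s then a else 0) else 0) := by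
      intro s
      induction s with
      | zero =>
        intro i
        simp [hwdef, netWorth]
      | succ s ih =>
        intro i
        have hL : netWorth (fun s i => e s i + u' s i) P' (s+1) i
            = netWorth (fun s i => e s i + u' s i) P' s i + (e s i + u' s i)
              + (∑ j, P' s j i) - (∑ j, P' s i j) := rfl
        rw [hL, ih i, hrow s i, hcol s i, hwsucc s i, hu'app s i]
        by_cases hi : i = i0
        · subst hi
          simp only [eq_self_iff_true, and_true, if_true, eq_false hne01, and_false, if_false]
          rw [ite_lt_succ' s1 s ε, ite_lt_succ' t0 s ε]
          ring
        · by_cases hj : i = j0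
          · subst hj
            simp only [eq_self_iff_true, and_true, if_true, eq_false hne10, and_false,
              if_false]
            rw [ite_lt_succ' k s a, ite_lt_succ' s1 s a]
            ring
          · simp only [eq_false hi, eq_false hj, and_false, if_false]
            ring
    have hsum_u' : ∀ τ, (∑ i, u' τ i) = (∑ i, ustar τ i)
        + ((if τ = k then a else 0) - (if τ = t0 then ε else 0)
          + ((if τ = s1 then ε else 0) - (if τ = s1 then a else 0))) := by
      intro τ
      simp only [hu'app]
      rw [Finset.sum_add_distrib]
      congr 1
      rw [Finset.sum_add_distrib, Finset.sum_sub_distrib, Finset.sum_sub_distrib,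
        sum_if_left' i0 (τ = k) a, sum_if_left' i0 (τ = t0) ε,
        sum_if_left' j0 (τ = s1) ε, sum_if_left' j0 (τ = s1) a]
    have hbudget : ∀ t, budget u' t = budget ustar t
        + ((if k ≤ t then a else 0) - (if t0 ≤ t then ε else 0)
          + ((if s1 ≤ t then ε else 0) - (if s1 ≤ t then a else 0))) := by
      intro t
      simp only [budget]
      rw [Finset.sum_congr rfl fun τ _ => hsum_u' τ, Finset.sum_add_distrib,
        Finset.sum_add_distrib, Finset.sum_sub_distrib, Finset.sum_sub_distrib,
        Finset.sum_ite_eq' (range (t+1)) k fun _ => a,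
        Finset.sum_ite_eq' (range (t+1)) t0 fun _ => ε,
        Finset.sum_ite_eq' (range (t+1)) s1 fun _ => ε,
        Finset.sum_ite_eq' (range (t+1)) s1 fun _ => a]
      simp only [Finset.mem_range, Nat.lt_succ_iff]
    clear_value P' u' D
    -- feasibility of the perturbed process
    have hfeas' : FeasibleFree T α Pbar e F P' u' := by
      intro t ht
      obtain ⟨h1, h2, h3, h4, h5⟩ := hfeas t ht
      refine ⟨?_, ?_, ?_, ?_, ?_⟩
      · -- P' nonnegative
        intro i j
        rw [hP'app]
        by_cases hij : i = i0 ∧ j = j0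
        · rw [if_pos hij]
          by_cases htk : t = k
          · rw [if_pos htk, if_neg (by omega : ¬ t = s1)]
            have := h1 i j
            linarith
          · by_cases hts : t = s1
            · rw [if_neg htk, if_pos hts]
              rcases hij with ⟨rfl, rfl⟩
              rw [hts]
              linarith [hεP]
            · rw [if_neg htk, if_neg hts]
              have := h1 i j
              linarith
        · rw [if_neg hij]
          have := h1 i j
          linarith
      · -- u' nonnegative
        intro i
        rw [hu'app]
        have b1 : 0 ≤ (if t = k ∧ i = i0 then a else 0) := by
          split_ifs
          · exact hapos.le
          · norm_num
        have b3 : 0 ≤ (if t = s1 ∧ i = j0 then ε else 0) - (if t = s1 ∧ i = j0 then a else 0) := by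
          split_ifs
          · linarith
          · norm_num
        by_cases hc : t = t0 ∧ i = i0
        · obtain ⟨ht1, hi1⟩ := hc
          rw [if_pos (show t = t0 ∧ i = i0 from ⟨ht1, hi1⟩), if_neg (show ¬ (t = k ∧ i = i0) by
            intro hx
            have h1x := hx.1
            omega)]
          have hnotj : ¬ (t = s1 ∧ i = j0) := fun hx => hne01 (hi1.symm.trans hx.2)
          rw [if_neg hnotj, if_neg hnotj, ht1, hi1]
          linarith [hεu]
        · rw [if_neg hc]
          have := h2 i
          linarith
      · -- payments below residual liabilities
        intro i j
        rw [hres t i j, hP'app t i j]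
        by_cases hij : i = i0 ∧ j = j0
        · rw [if_pos hij, if_pos hij]
          obtain ⟨hi1, hj1⟩ := hij
          rw [hi1, hj1]
          rcases Nat.lt_trichotomy t k with hc | hc | hc
          · have hD0 : D t = 0 := by rw [hDapp, if_pos (by omega : t ≤ k)]
            rw [hD0, if_neg (by omega : ¬ t = k), if_neg (by omega : ¬ t = s1)]
            have := hPle t ht i0 j0
            linarith
          · have hD0 : D t = 0 := by rw [hDapp, if_pos (le_of_eq hc)]
            rw [hD0, if_pos hc, if_neg (by omega : ¬ t = s1)]
            have hs := hslack t (by omega) (by omega)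
            have hkey : a ≤ resLiab α Pbar Pstar t i0 j0 - Pstar t i0 j0 := by
              rw [hadef, div_le_iff₀ hpow]
              have h7 : α ^ (s1 - t) = α ^ (s1 - k) := by rw [hc]
              rw [h7] at hs
              linarith [hεP, hs,
                mul_comm (α ^ (s1 - k)) (resLiab α Pbar Pstar t i0 j0 - Pstar t i0 j0)]
            linarith
          · rcases Nat.lt_trichotomy t s1 with hc2 | hc2 | hc2
            · have hDt : D t = α ^ (t - k) * a := by
                rw [hDapp, if_neg (by omega : ¬ t ≤ k), if_pos (by omega : t ≤ s1)]
              rw [hDt, if_neg (by omega : ¬ t = k), if_neg (by omega : ¬ t = s1)]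
              have hs := hslack t (by omega) hc2
              have hid : α ^ (s1 - t) * (α ^ (t - k) * a) = ε := by
                rw [← mul_assoc, ← pow_add, show s1 - t + (t - k) = s1 - k by omega,
                  mul_comm]
                exact hamul
              have h5' : ε ≤ α ^ (s1 - t) * (resLiab α Pbar Pstar t i0 j0 - Pstar t i0 j0) :=
                le_trans hεP hs
              rw [← hid] at h5'
              have h6 := le_of_mul_le_mul_left h5' (pow_pos hαpos (s1 - t))
              linarith
            · have hDt : D t = ε := by
                rw [hDapp, if_neg (by omega : ¬ t ≤ k), if_pos (by omega : t ≤ s1), hc2,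
                  mul_comm]
                exact hamul
              rw [hDt, if_neg (by omega : ¬ t = k), if_pos hc2]
              have := h3 i0 j0
              linarith
            · have hDt : D t = 0 := by
                rw [hDapp, if_neg (by omega : ¬ t ≤ k), if_neg (by omega : ¬ t ≤ s1)]
              rw [hDt, if_neg (by omega : ¬ t = k), if_neg (by omega : ¬ t = s1)]
              have := h3 i0 j0
              linarith
        · rw [if_neg hij, if_neg hij]
          have := h3 i j
          linarith
      · -- net worths nonnegative
        intro i
        rw [hworth (t+1) i]
        have hwnn : 0 ≤ w (t+1) i := hw0 (t+1) (by omega) (by omega) i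
        have bi : 0 ≤ (if i = i0 then (if s1 < t+1 then ε else 0)
            - (if t0 < t+1 then ε else 0) else 0)
            + (if i = j0 then (if k < t+1 then a else 0) - (if s1 < t+1 then a else 0) else 0)
            ∨ (i = i0 ∧ t0 < t+1 ∧ t+1 ≤ s1) := by
          by_cases hi : i = i0
          · by_cases hcc : t0 < t+1 ∧ t+1 ≤ s1
            · exact Or.inr ⟨hi, hcc.1, hcc.2⟩
            · left
              rw [if_pos hi, if_neg (show ¬ i = j0 from fun hx => hne01 (hi.symm.trans hx))]
              by_cases hl1 : t0 < t + 1
              · have hl2 : s1 < t + 1 := by omega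
                rw [if_pos hl1, if_pos hl2]
                linarith
              · rw [if_neg hl1, if_neg (by omega : ¬ s1 < t + 1)]
                linarith
          · left
            rw [if_neg hi]
            by_cases hj : i = j0
            · rw [if_pos hj]
              by_cases hl2 : s1 < t + 1
              · rw [if_pos hl2, if_pos (by omega : k < t + 1)]
                linarith
              · rw [if_neg hl2]
                split_ifs <;> linarith [hapos]
            · rw [if_neg hj]
              linarith
        rcases bi with hb | ⟨hi, hl1, hl2⟩
        · linarith
        · rw [if_pos hi, if_neg (show ¬ i = j0 from fun hx => hne01 (hi.symm.trans hx)),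
            if_pos hl1, if_neg (by omega : ¬ s1 < t + 1)]
          have := hεw (t+1) hl1 hl2
          rw [hi]
          linarith
      · -- budget constraint
        rw [hbudget t]
        by_cases hc1 : s1 ≤ t
        · rw [if_pos hc1, if_pos hc1, if_pos (by omega : k ≤ t), if_pos (by omega : t0 ≤ t)]
          linarith
        · rw [if_neg hc1, if_neg hc1]
          by_cases hc2 : t0 ≤ t
          · rw [if_pos hc2, if_pos (by omega : k ≤ t)]
            linarith
          · rw [if_neg hc2]
            by_cases hc3 : k ≤ t
            · rw [if_pos hc3]
              have hmono : budget ustar t + ustar t0 i0 ≤ budget ustar t0 := by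
                have hsplit : budget ustar t0 = budget ustar t
                    + ∑ τ ∈ Finset.Ico (t+1) (t0+1), ∑ i, ustar τ i := by
                  simp only [budget, Finset.range_eq_Ico]
                  rw [← Finset.sum_Ico_consecutive _ (by omega : 0 ≤ t+1)
                    (by omega : t+1 ≤ t0+1)]
                have hterm : ∑ i, ustar t0 i ≤ ∑ τ ∈ Finset.Ico (t+1) (t0+1), ∑ i, ustar τ i := by
                  apply Finset.single_le_sum (f := fun τ => ∑ i, ustar τ i)
                  · intro τ hτ
                    rw [Finset.mem_Ico] at hτ
                    exact Finset.sum_nonneg fun i _ => hunn τ (by omega) i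
                  · rw [Finset.mem_Ico]; omega
                have hone : ustar t0 i0 ≤ ∑ i, ustar t0 i :=
                  Finset.single_le_sum (fun i _ => hunn t0 ht0T i) (Finset.mem_univ i0)
                linarith
              have hF1 : F t = F k := hFc t hc3 (by omega)
              have hF2 : F t0 = F k := hFc t0 (by omega) ht0T
              have hb0 := hbud t0 ht0T
              linarith
            · rw [if_neg hc3]
              linarith
    -- strict cost decrease
    have hDnn : ∀ t, 0 ≤ D t := by
      intro t
      rw [hDapp]
      split_ifs
      · exact le_refl 0
      · exact mul_nonneg (pow_nonneg hαpos.le _) hapos.le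
      · exact le_refl 0
    have hDs1 : D s1 = ε := by
      rw [hDapp, if_neg (by omega : ¬ s1 ≤ k), if_pos le_rfl, mul_comm]
      exact hamul
    have hDT : D T = 0 := by
      rw [hDapp, if_neg (by omega : ¬ T ≤ k), if_neg (by omega : ¬ T ≤ s1)]
    have hentry : ∀ t, (∑ i, ∑ j, (resLiab α Pbar P' t i j - P' t i j))
        = (∑ i, ∑ j, (resLiab α Pbar Pstar t i j - Pstar t i j))
          - (D t + ((if t = k then a else 0) - (if t = s1 then ε else 0))) := by
      intro t
      have h1 : ∀ i j : Fin n, resLiab α Pbar P' t i j - P' t i j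
          = (resLiab α Pbar Pstar t i j - Pstar t i j)
            - (if i = i0 ∧ j = j0 then
                D t + ((if t = k then a else 0) - (if t = s1 then ε else 0)) else 0) := by
        intro i j
        rw [hres t i j, hP'app t i j]
        by_cases hij : i = i0 ∧ j = j0
        · rw [if_pos hij, if_pos hij, if_pos hij]; ring
        · rw [if_neg hij, if_neg hij, if_neg hij]; ring
      calc (∑ i, ∑ j, (resLiab α Pbar P' t i j - P' t i j))
          = ∑ i, ∑ j, ((resLiab α Pbar Pstar t i j - Pstar t i j)
            - (if i = i0 ∧ j = j0 then
                D t + ((if t = k then a else 0) - (if t = s1 then ε else 0)) else 0)) := by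
            exact Finset.sum_congr rfl fun i _ => Finset.sum_congr rfl fun j _ => h1 i j
        _ = (∑ i, ∑ j, (resLiab α Pbar Pstar t i j - Pstar t i j))
            - (D t + ((if t = k then a else 0) - (if t = s1 then ε else 0))) := by
            simp only [Finset.sum_sub_distrib]
            congr 1
            rw [Finset.sum_congr rfl (fun i (_ : i ∈ (univ : Finset (Fin n))) =>
              sum_if_left' j0 (i = i0)
                (D t + ((if t = k then a else 0) - (if t = s1 then ε else 0)))),
              sum_if_single' i0 _]
    have hkT : k < T := by omega
    have hsum1 : ∑ t ∈ range T, (∑ i, ∑ j, (resLiab α Pbar P' t i j - P' t i j))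
        = (∑ t ∈ range T, ∑ i, ∑ j, (resLiab α Pbar Pstar t i j - Pstar t i j))
          - ((∑ t ∈ range T, D t) + (a - ε)) := by
      rw [Finset.sum_congr rfl fun t _ => hentry t, Finset.sum_sub_distrib,
        Finset.sum_add_distrib, Finset.sum_sub_distrib,
        Finset.sum_ite_eq' (range T) k fun _ => a,
        Finset.sum_ite_eq' (range T) s1 fun _ => ε,
        if_pos (Finset.mem_range.2 hkT), if_pos (Finset.mem_range.2 hs1T)]
    have hηterm : (∑ i, ∑ j, resLiab α Pbar P' T i j)
        = ∑ i, ∑ j, resLiab α Pbar Pstar T i j := by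
      apply Finset.sum_congr rfl
      intro i _
      apply Finset.sum_congr rfl
      intro j _
      rw [hres T i j, hDT]
      simp
    have hbudterm : budget u' (T-1) = budget ustar (T-1) := by
      rw [hbudget (T-1), if_pos (show k ≤ T-1 by omega), if_pos (show t0 ≤ T-1 by omega),
        if_pos (show s1 ≤ T-1 by omega), if_pos (show s1 ≤ T-1 by omega)]
      ring
    have hDsum : ε ≤ ∑ t ∈ range T, D t := by
      have hs := Finset.single_le_sum (f := D) (fun t _ => hDnn t) (Finset.mem_range.2 hs1T)
      rw [hDs1] at hs
      exact hs
    have hcostlt : costFree T α η γ Pbar P' u' < costFree T α η γ Pbar Pstar ustar := by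
      simp only [costFree]
      rw [hsum1, hηterm, hbudterm]
      have hZ : 0 < (∑ t ∈ range T, D t) + (a - ε) := by linarith
      nlinarith [mul_pos h1η hZ]
    have hcontra := hmin P' u' hfeas'
    linarith
end
end

section
/- Let ([P*],[u*]) be an optimal process for the free-payments control problem with η∈[0,1) and γ>0. If some debt of node i remains unpaid at period t, i.e. p*_i(t)<p̄*_i(t) where p*(t)=P*(t)1 and p̄*(t)=P̄*(t)1, then node i pays out its entire balance at that period: w*_i(t+1)=0. -/
open Finset

noncomputable section

namespace Stmt9

variable {n : ℕ}

lemma resLiab_congr (α : ℝ) (Pbar : Matrix (Fin n) (Fin n) ℝ)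
    (P Q : ℕ → Matrix (Fin n) (Fin n) ℝ) :
    ∀ s, (∀ k, k < s → P k = Q k) → resLiab α Pbar P s = resLiab α Pbar Q s := by
  intro s
  induction s with
  | zero => intro _; rfl
  | succ s ih =>
      intro h
      funext a b
      show α * (resLiab α Pbar P s a b - P s a b) = α * (resLiab α Pbar Q s a b - Q s a b)
      rw [ih (fun k hk => h k (Nat.lt_succ_of_lt hk)), h s (Nat.lt_succ_self s)]

lemma netWorth_congr (c : ℕ → Fin n → ℝ)
    (P Q : ℕ → Matrix (Fin n) (Fin n) ℝ) :
    ∀ s, (∀ k, k < s → P k = Q k) → netWorth c P s = netWorth c Q s := by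
  intro s
  induction s with
  | zero => intro _; rfl
  | succ s ih =>
      intro h
      funext x
      show netWorth c P s x + c s x + (∑ j, P s j x) - (∑ j, P s x j)
         = netWorth c Q s x + c s x + (∑ j, Q s j x) - (∑ j, Q s x j)
      rw [ih (fun k hk => h k (Nat.lt_succ_of_lt hk)), h s (Nat.lt_succ_self s)]

/-- one-slot update -/
def upd (P : ℕ → Matrix (Fin n) (Fin n) ℝ) (t : ℕ) (A : Matrix (Fin n) (Fin n) ℝ) :
    ℕ → Matrix (Fin n) (Fin n) ℝ := fun k => if k = t then A else P k

lemma upd_self (P : ℕ → Matrix (Fin n) (Fin n) ℝ) (t A) : upd P t A t = A := by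
  simp [upd]

lemma upd_ne (P : ℕ → Matrix (Fin n) (Fin n) ℝ) (t A) {k} (h : k ≠ t) : upd P t A k = P k := by
  simp [upd, h]

lemma resLiab_upd_le (α : ℝ) (Pbar : Matrix (Fin n) (Fin n) ℝ) (P : ℕ → Matrix (Fin n) (Fin n) ℝ)
    (t : ℕ) (A : Matrix (Fin n) (Fin n) ℝ) {s : ℕ} (hs : s ≤ t) :
    resLiab α Pbar (upd P t A) s = resLiab α Pbar P s :=
  resLiab_congr α Pbar _ _ s (fun k hk => upd_ne P t A (by omega))

lemma resLiab_upd_gt (α : ℝ) (Pbar : Matrix (Fin n) (Fin n) ℝ) (P : ℕ → Matrix (Fin n) (Fin n) ℝ)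
    (t : ℕ) (A : Matrix (Fin n) (Fin n) ℝ) :
    ∀ s, t < s → ∀ a b, resLiab α Pbar (upd P t A) s a b
      = resLiab α Pbar P s a b - α ^ (s - t) * (A a b - P t a b) := by
  intro s hs
  induction s with
  | zero => omega
  | succ s ih =>
      intro a b
      rcases Nat.lt_or_ge t s with h | h
      · have hst : s - t ≠ 0 := by omega
        show α * (resLiab α Pbar (upd P t A) s a b - upd P t A s a b)
           = α * (resLiab α Pbar P s a b - P s a b) - α ^ (s + 1 - t) * (A a b - P t a b)
        rw [ih h a b, upd_ne P t A (by omega : s ≠ t)]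
        have : s + 1 - t = (s - t) + 1 := by omega
        rw [this]
        ring
      · obtain rfl : t = s := by omega
        show α * (resLiab α Pbar (upd P t A) t a b - upd P t A t a b)
           = α * (resLiab α Pbar P t a b - P t a b) - α ^ (t + 1 - t) * (A a b - P t a b)
        rw [resLiab_upd_le α Pbar P t A (le_refl t), upd_self]
        have h1 : t + 1 - t = 1 := by omega
        rw [h1]
        ring

lemma netWorth_upd_le (c : ℕ → Fin n → ℝ) (P : ℕ → Matrix (Fin n) (Fin n) ℝ)
    (t : ℕ) (A : Matrix (Fin n) (Fin n) ℝ) {s : ℕ} (hs : s ≤ t) :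
    netWorth c (upd P t A) s = netWorth c P s :=
  netWorth_congr c _ _ s (fun k hk => upd_ne P t A (by omega))

lemma netWorth_upd_gt (c : ℕ → Fin n → ℝ) (P : ℕ → Matrix (Fin n) (Fin n) ℝ)
    (t : ℕ) (A : Matrix (Fin n) (Fin n) ℝ) :
    ∀ s, t < s → ∀ x, netWorth c (upd P t A) s x
      = netWorth c P s x + ((∑ a, A a x) - (∑ a, P t a x)) - ((∑ b, A x b) - (∑ b, P t x b)) := by
  intro s hs
  induction s with
  | zero => omega
  | succ s ih =>
      intro x
      rcases Nat.lt_or_ge t s with h | h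
      · show netWorth c (upd P t A) s x + c s x + (∑ j, upd P t A s j x) - (∑ j, upd P t A s x j) = _
        rw [ih h x, upd_ne P t A (by omega : s ≠ t)]
        show _ = netWorth c P s x + c s x + (∑ j, P s j x) - (∑ j, P s x j)
          + ((∑ a, A a x) - (∑ a, P t a x)) - ((∑ b, A x b) - (∑ b, P t x b))
        ring
      · obtain rfl : t = s := by omega
        show netWorth c (upd P t A) t x + c t x + (∑ j, upd P t A t j x) - (∑ j, upd P t A t x j) = _
        rw [netWorth_upd_le c P t A (le_refl t), upd_self]
        show _ = netWorth c P t x + c t x + (∑ j, P t j x) - (∑ j, P t x j)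
          + ((∑ a, A a x) - (∑ a, P t a x)) - ((∑ b, A x b) - (∑ b, P t x b))
        ring

lemma exists_pos_min {β : Type*} (S : Finset β) (f : β → ℝ) (h : ∀ x ∈ S, 0 < f x) :
    ∃ d : ℝ, 0 < d ∧ ∀ x ∈ S, d ≤ f x := by
  classical
  induction S using Finset.induction_on with
  | empty => exact ⟨1, one_pos, by simp⟩
  | @insert a S ha ih =>
      obtain ⟨d, hd, hds⟩ := ih (fun x hx => h x (Finset.mem_insert_of_mem hx))
      refine ⟨min d (f a), lt_min hd (h a (Finset.mem_insert_self a S)), ?_⟩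
      intro x hx
      rcases Finset.mem_insert.mp hx with rfl | hx
      · exact min_le_right _ _
      · exact le_trans (min_le_left _ _) (hds x hx)


lemma sum2_sub {n : ℕ} (f g : Fin n → Fin n → ℝ) :
    (∑ a, ∑ b, (f a b - g a b)) = (∑ a, ∑ b, f a b) - (∑ a, ∑ b, g a b) := by
  simp [Finset.sum_sub_distrib]

lemma sum2_ite {n : ℕ} (i j : Fin n) (r : ℝ) :
    (∑ a : Fin n, ∑ b : Fin n, (if a = i ∧ b = j then r else 0)) = r := by
  have h1 : ∀ a : Fin n, (∑ b, if a = i ∧ b = j then r else 0) = if a = i then r else 0 := by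
    intro a; by_cases ha : a = i <;> simp [ha]
  rw [Finset.sum_congr rfl (fun a _ => h1 a)]
  simp

lemma prepay_contra {n : ℕ} (T : ℕ) (α η γ : ℝ) (hα : 1 ≤ α) (hη0 : 0 ≤ η) (hη1 : η < 1)
    (Pbar : Matrix (Fin n) (Fin n) ℝ) (e : ℕ → Fin n → ℝ) (F : ℕ → ℝ)
    (Pstar : ℕ → Matrix (Fin n) (Fin n) ℝ) (ustar : ℕ → Fin n → ℝ)
    (hopt : OptimalFree T α η γ Pbar e F Pstar ustar)
    (t : ℕ) (ht : t < T) (i j : Fin n)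
    (hgap : Pstar t i j < resLiab α Pbar Pstar t i j)
    (hzero : ∀ s, t < s → s < T → Pstar s i j = 0)
    (hres : ∀ s, t < s → s < T → 0 < resLiab α Pbar Pstar s i j)
    (hwpos : ∀ s, t < s → s ≤ T → 0 < netWorth (fun k x => e k x + ustar k x) Pstar s i) :
    False := by
  classical
  have hα0 : (0:ℝ) < α := lt_of_lt_of_le one_pos hα
  set c : ℕ → Fin n → ℝ := fun k x => e k x + ustar k x with hc
  obtain ⟨d₁, hd₁, hd₁S⟩ := exists_pos_min (Finset.Ico (t+1) T)
      (fun s => resLiab α Pbar Pstar s i j / α ^ (s - t))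
      (by
        intro s hs
        rw [Finset.mem_Ico] at hs
        exact div_pos (hres s (by omega) hs.2) (pow_pos hα0 _))
  obtain ⟨d₂, hd₂, hd₂S⟩ := exists_pos_min (Finset.Icc (t+1) T)
      (fun s => netWorth c Pstar s i)
      (by
        intro s hs
        rw [Finset.mem_Icc] at hs
        exact hwpos s (by omega) hs.2)
  set δ : ℝ := min (min d₁ d₂) (resLiab α Pbar Pstar t i j - Pstar t i j) with hδdef
  have hδ : 0 < δ := lt_min (lt_min hd₁ hd₂) (by linarith)
  have hδgap : δ ≤ resLiab α Pbar Pstar t i j - Pstar t i j := min_le_right _ _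
  have hδ1 : ∀ s, t < s → s < T → α ^ (s - t) * δ ≤ resLiab α Pbar Pstar s i j := by
    intro s hs hsT
    have h1 : δ ≤ resLiab α Pbar Pstar s i j / α ^ (s - t) :=
      le_trans (le_trans (min_le_left _ _) (min_le_left _ _))
        (hd₁S s (Finset.mem_Ico.mpr ⟨by omega, hsT⟩))
    calc α ^ (s - t) * δ ≤ α ^ (s - t) * (resLiab α Pbar Pstar s i j / α ^ (s - t)) := by
          exact mul_le_mul_of_nonneg_left h1 (le_of_lt (pow_pos hα0 _))
      _ = resLiab α Pbar Pstar s i j := by field_simp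
  have hδ2 : ∀ s, t < s → s ≤ T → δ ≤ netWorth c Pstar s i := by
    intro s hs hsT
    exact le_trans (le_trans (min_le_left _ _) (min_le_right _ _))
      (hd₂S s (Finset.mem_Icc.mpr ⟨by omega, hsT⟩))
  set A : Matrix (Fin n) (Fin n) ℝ :=
    fun a b => Pstar t a b + (if a = i ∧ b = j then δ else 0) with hA
  have hAab : ∀ a b, A a b = Pstar t a b + (if a = i ∧ b = j then δ else 0) := fun a b => rfl
  set Q : ℕ → Matrix (Fin n) (Fin n) ℝ := upd Pstar t A with hQ
  have hQt : ∀ a b, Q t a b = Pstar t a b + (if a = i ∧ b = j then δ else 0) := by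
    intro a b; rw [hQ, upd_self]
  have hQne : ∀ s, s ≠ t → Q s = Pstar s := fun s hs => upd_ne Pstar t A hs
  have feas := hopt.1
  have hRle : ∀ s, s ≤ t → resLiab α Pbar Q s = resLiab α Pbar Pstar s := by
    intro s hs; exact resLiab_upd_le α Pbar Pstar t A hs
  have hRgt : ∀ s, t < s → ∀ a b, resLiab α Pbar Q s a b
      = resLiab α Pbar Pstar s a b - α ^ (s - t) * (if a = i ∧ b = j then δ else 0) := by
    intro s hs a b
    rw [hQ, resLiab_upd_gt α Pbar Pstar t A s hs a b, hAab a b]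
    ring
  have hcolA : ∀ x, (∑ a, A a x) - (∑ a, Pstar t a x) = (if x = j then δ else 0) := by
    intro x
    have : (∑ a, A a x) = (∑ a, Pstar t a x) + ∑ a, (if a = i ∧ x = j then δ else 0) := by
      rw [← Finset.sum_add_distrib]
    rw [this]
    by_cases hx : x = j
    · subst hx; simp
    · simp [hx]
  have hrowA : ∀ x, (∑ b, A x b) - (∑ b, Pstar t x b) = (if x = i then δ else 0) := by
    intro x
    have : (∑ b, A x b) = (∑ b, Pstar t x b) + ∑ b, (if x = i ∧ b = j then δ else 0) := by
      rw [← Finset.sum_add_distrib]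
    rw [this]
    by_cases hx : x = i
    · subst hx; simp
    · simp [hx]
  have hWgt : ∀ s, t < s → ∀ x, netWorth c Q s x
      = netWorth c Pstar s x + (if x = j then δ else 0) - (if x = i then δ else 0) := by
    intro s hs x
    rw [hQ, netWorth_upd_gt c Pstar t A s hs x]
    rw [hcolA x, hrowA x]
  have feasQ : FeasibleFree T α Pbar e F Q ustar := by
    intro s hsT
    obtain ⟨f1, f2, f3, f4, f5⟩ := feas s hsT
    refine ⟨?_, f2, ?_, ?_, f5⟩
    · intro a b
      rcases eq_or_ne s t with rfl | hst
      · rw [hQt a b]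
        have := f1 a b
        split_ifs with h
        · linarith
        · linarith
      · rw [hQne s hst]; exact f1 a b
    · intro a b
      rcases lt_trichotomy s t with hlt | heq | hgt
      · rw [hQne s (by omega), hRle s (le_of_lt hlt)]; exact f3 a b
      · subst heq
        rw [hQt a b, hRle s (le_refl s)]
        split_ifs with h
        · obtain ⟨rfl, rfl⟩ := h
          linarith [hδgap]
        · simpa using f3 a b
      · rw [hQne s (by omega), hRgt s hgt a b]
        split_ifs with h
        · obtain ⟨rfl, rfl⟩ := h
          rw [hzero s hgt hsT]
          linarith [hδ1 s hgt hsT]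
        · simp [f3 a b]
    · intro x
      rcases Nat.lt_or_ge s t with hlt | hge
      · rw [hQ, netWorth_upd_le c Pstar t A (by omega : s + 1 ≤ t)]; exact f4 x
      · have hgt : t < s + 1 := by omega
        rw [hWgt (s+1) hgt x]
        have hw := f4 x
        rw [show (fun s i => e s i + ustar s i) = c from rfl] at hw
        split_ifs with h1 h2 h3
        · linarith
        · linarith
        · subst h3
          have := hδ2 (s+1) hgt (by omega)
          linarith
        · linarith
  -- cost comparison
  set f : ℕ → ℝ := fun s => ∑ a, ∑ b, (resLiab α Pbar Pstar s a b - Pstar s a b) with hf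
  set f' : ℕ → ℝ := fun s => ∑ a, ∑ b, (resLiab α Pbar Q s a b - Q s a b) with hf'
  have htermwise : ∀ s ∈ Finset.range T, f' s ≤ f s + (if s = t then -δ else 0) := by
    intro s hs
    rcases lt_trichotomy s t with hlt | heq | hgt
    · rw [if_neg (by omega)]
      have : f' s = f s := by
        rw [hf, hf']
        simp only
        rw [hRle s (le_of_lt hlt), hQne s (by omega)]
      rw [this]; simp
    · subst heq
      rw [if_pos rfl]
      have : f' s = f s - δ := by
        rw [hf, hf']
        simp only
        rw [hRle s (le_refl s)]
        have h2 : ∀ a b, resLiab α Pbar Pstar s a b - Q s a b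
            = (resLiab α Pbar Pstar s a b - Pstar s a b) - (if a = i ∧ b = j then δ else 0) := by
          intro a b; rw [hQt a b]; ring
        calc (∑ a, ∑ b, (resLiab α Pbar Pstar s a b - Q s a b))
            = ∑ a, ∑ b, ((resLiab α Pbar Pstar s a b - Pstar s a b) - (if a = i ∧ b = j then δ else 0)) :=
              Finset.sum_congr rfl (fun a _ => Finset.sum_congr rfl (fun b _ => h2 a b))
          _ = _ := by rw [sum2_sub, sum2_ite]
      rw [this]; simp
    · rw [if_neg (by omega)]
      have : f' s = f s - α ^ (s - t) * δ := by
        rw [hf, hf']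
        simp only
        have h2 : ∀ a b, resLiab α Pbar Q s a b - Q s a b
            = (resLiab α Pbar Pstar s a b - Pstar s a b)
              - (if a = i ∧ b = j then α ^ (s - t) * δ else 0) := by
          intro a b
          rw [hQne s (by omega), hRgt s hgt a b]
          split_ifs with h
          · ring
          · ring
        calc (∑ a, ∑ b, (resLiab α Pbar Q s a b - Q s a b))
            = ∑ a, ∑ b, ((resLiab α Pbar Pstar s a b - Pstar s a b)
                - (if a = i ∧ b = j then α ^ (s - t) * δ else 0)) :=
              Finset.sum_congr rfl (fun a _ => Finset.sum_congr rfl (fun b _ => h2 a b))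
          _ = _ := by rw [sum2_sub, sum2_ite]
      rw [this]
      have : 0 ≤ α ^ (s - t) * δ := le_of_lt (mul_pos (pow_pos hα0 _) hδ)
      linarith
  have hS1 : (∑ s ∈ Finset.range T, f' s) ≤ (∑ s ∈ Finset.range T, f s) - δ := by
    calc (∑ s ∈ Finset.range T, f' s)
        ≤ ∑ s ∈ Finset.range T, (f s + (if s = t then -δ else 0)) :=
          Finset.sum_le_sum htermwise
      _ = (∑ s ∈ Finset.range T, f s) + ∑ s ∈ Finset.range T, (if s = t then -δ else 0) :=
          Finset.sum_add_distrib
      _ = (∑ s ∈ Finset.range T, f s) - δ := by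
          rw [Finset.sum_ite_eq' (Finset.range T) t (fun _ => -δ)]
          rw [if_pos (Finset.mem_range.mpr ht)]
          ring
  have hS2 : (∑ a, ∑ b, resLiab α Pbar Q T a b) ≤ (∑ a, ∑ b, resLiab α Pbar Pstar T a b) := by
    have h2 : ∀ a b, resLiab α Pbar Q T a b
        = resLiab α Pbar Pstar T a b - (if a = i ∧ b = j then α ^ (T - t) * δ else 0) := by
      intro a b
      rw [hRgt T ht a b]
      split_ifs with h
      · ring
      · ring
    calc (∑ a, ∑ b, resLiab α Pbar Q T a b)
        = ∑ a, ∑ b, (resLiab α Pbar Pstar T a b - (if a = i ∧ b = j then α ^ (T - t) * δ else 0)) :=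
          Finset.sum_congr rfl (fun a _ => Finset.sum_congr rfl (fun b _ => h2 a b))
      _ = (∑ a, ∑ b, resLiab α Pbar Pstar T a b) - α ^ (T - t) * δ :=
          (sum2_sub _ _).trans (by rw [sum2_ite])
      _ ≤ _ := by
          have : 0 ≤ α ^ (T - t) * δ := le_of_lt (mul_pos (pow_pos hα0 _) hδ)
          linarith
  have hcost : costFree T α η γ Pbar Q ustar < costFree T α η γ Pbar Pstar ustar := by
    unfold costFree
    have h1η : 0 < 1 - η := by linarith
    have hb : budget ustar (T-1) = budget ustar (T-1) := rfl
    have hm1 : (1 - η) * (∑ s ∈ Finset.range T, f' s) ≤ (1-η) * ((∑ s ∈ Finset.range T, f s) - δ) :=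
      mul_le_mul_of_nonneg_left hS1 (le_of_lt h1η)
    have hm2 : η * (∑ a, ∑ b, resLiab α Pbar Q T a b) ≤ η * (∑ a, ∑ b, resLiab α Pbar Pstar T a b) :=
      mul_le_mul_of_nonneg_left hS2 hη0
    rw [hf, hf'] at hm1
    simp only at hm1
    nlinarith [mul_pos h1η hδ]
  have := hopt.2 Q ustar feasQ
  linarith

lemma chain_contra {n : ℕ} (T : ℕ) (α η γ : ℝ) (hα : 1 ≤ α) (hη0 : 0 ≤ η) (hη1 : η < 1)
    (Pbar : Matrix (Fin n) (Fin n) ℝ) (e : ℕ → Fin n → ℝ) (F : ℕ → ℝ)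
    (Pstar : ℕ → Matrix (Fin n) (Fin n) ℝ) (ustar : ℕ → Fin n → ℝ)
    (hopt : OptimalFree T α η γ Pbar e F Pstar ustar)
    (t : ℕ) (ht2 : t + 2 ≤ T) (L : ℕ) (hL : 1 ≤ L) (G : ℕ → Fin n)
    (hedge : ∀ q, q < L → 0 < Pstar (t+1) (G q) (G (q+1)))
    (hwi : 0 < netWorth (fun k x => e k x + ustar k x) Pstar (t+1) (G 0))
    (hterm : ∀ s, t+2 ≤ s → s ≤ T → 0 < netWorth (fun k x => e k x + ustar k x) Pstar s (G L)) :
    False := by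
  classical
  have hα0 : (0:ℝ) < α := lt_of_lt_of_le one_pos hα
  have hL0 : (0:ℝ) < (L:ℝ) := by exact_mod_cast hL
  set c : ℕ → Fin n → ℝ := fun k x => e k x + ustar k x with hc
  have feas := hopt.1
  set cnt : Fin n → Fin n → ℝ :=
    fun a b => ∑ q ∈ Finset.range L, (if G q = a ∧ G (q+1) = b then (1:ℝ) else 0) with hcnt
  set co : Fin n → ℝ := fun x => ∑ q ∈ Finset.range L, (if G q = x then (1:ℝ) else 0) with hco
  set ci : Fin n → ℝ := fun x => ∑ q ∈ Finset.range L, (if G (q+1) = x then (1:ℝ) else 0) with hci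
  have hcnt_nonneg : ∀ a b, 0 ≤ cnt a b := by
    intro a b
    apply Finset.sum_nonneg
    intro q _
    split_ifs <;> norm_num
  have hcnt_le : ∀ a b, cnt a b ≤ (L:ℝ) := by
    intro a b
    calc cnt a b ≤ ∑ q ∈ Finset.range L, (1:ℝ) := by
          apply Finset.sum_le_sum
          intro q _
          split_ifs <;> norm_num
      _ = (L:ℝ) := by simp
  have hcnt_ex : ∀ a b, cnt a b ≠ 0 → ∃ q, q < L ∧ G q = a ∧ G (q+1) = b := by
    intro a b hab
    by_contra hno
    push_neg at hno
    apply hab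
    apply Finset.sum_eq_zero
    intro q hq
    rw [Finset.mem_range] at hq
    have := hno q hq
    split_ifs with h
    · exact absurd h.2 (this h.1)
    · rfl
  have hrowcnt : ∀ a, (∑ b, cnt a b) = co a := by
    intro a
    rw [hcnt, hco]
    rw [Finset.sum_comm]
    apply Finset.sum_congr rfl
    intro q _
    by_cases h : G q = a
    · simp [h, Finset.sum_ite_eq]
    · simp [h]
  have hcolcnt : ∀ b, (∑ a, cnt a b) = ci b := by
    intro b
    rw [hcnt, hci]
    rw [Finset.sum_comm]
    apply Finset.sum_congr rfl
    intro q _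
    by_cases h : G (q+1) = b
    · simp [h, Finset.sum_ite_eq]
    · simp [h]
  have htele : ∀ x, ci x - co x
      = (if G L = x then (1:ℝ) else 0) - (if G 0 = x then (1:ℝ) else 0) := by
    intro x
    rw [hci, hco]
    rw [← Finset.sum_sub_distrib]
    exact Finset.sum_range_sub (fun q => if G q = x then (1:ℝ) else 0) L
  have hcnt_total : (∑ a, ∑ b, cnt a b) = (L:ℝ) := by
    rw [Finset.sum_congr rfl (fun a (_ : a ∈ Finset.univ) => hrowcnt a), hco]
    rw [Finset.sum_comm]
    rw [Finset.sum_congr rfl (fun q (_ : q ∈ Finset.range L) => by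
      simp [Finset.sum_ite_eq] : ∀ q ∈ Finset.range L, (∑ x, if G q = x then (1:ℝ) else 0) = 1)]
    simp
  -- delta selection
  obtain ⟨d₁, hd₁, hd₁S⟩ := exists_pos_min
      ((Finset.univ ×ˢ Finset.univ).filter (fun p : Fin n × Fin n => cnt p.1 p.2 ≠ 0))
      (fun p => Pstar (t+1) p.1 p.2)
      (by
        intro p hp
        rw [Finset.mem_filter] at hp
        obtain ⟨q, hq, h1, h2⟩ := hcnt_ex p.1 p.2 hp.2
        show 0 < Pstar (t+1) p.1 p.2
        rw [← h1, ← h2]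
        exact hedge q hq)
  obtain ⟨d₂, hd₂, hd₂S⟩ := exists_pos_min (Finset.Icc (t+2) T)
      (fun s => netWorth c Pstar s (G L))
      (by
        intro s hs
        rw [Finset.mem_Icc] at hs
        exact hterm s hs.1 hs.2)
  set δ : ℝ := min (netWorth c Pstar (t+1) (G 0)) (min (d₁ / (α * L)) (d₂ / α)) with hδdef
  have hδ : 0 < δ := by
    apply lt_min hwi
    exact lt_min (div_pos hd₁ (mul_pos hα0 hL0)) (div_pos hd₂ hα0)
  have hδε : δ ≤ netWorth c Pstar (t+1) (G 0) := min_le_left _ _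
  have hδ1 : ∀ a b, cnt a b ≠ 0 → α * δ * (L:ℝ) ≤ Pstar (t+1) a b := by
    intro a b hab
    have h1 : δ ≤ d₁ / (α * L) := le_trans (min_le_right _ _) (min_le_left _ _)
    have h2 : d₁ ≤ Pstar (t+1) a b := by
      apply hd₁S (a, b)
      rw [Finset.mem_filter]
      exact ⟨Finset.mem_product.mpr ⟨Finset.mem_univ a, Finset.mem_univ b⟩, hab⟩
    calc α * δ * (L:ℝ) ≤ α * (d₁ / (α * L)) * L := by
          apply mul_le_mul_of_nonneg_right _ (le_of_lt hL0)
          exact mul_le_mul_of_nonneg_left h1 (le_of_lt hα0)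
      _ = d₁ := by field_simp
      _ ≤ _ := h2
  have hδ2 : ∀ s, t+2 ≤ s → s ≤ T → α * δ ≤ netWorth c Pstar s (G L) := by
    intro s hs hsT
    have h1 : δ ≤ d₂ / α := le_trans (min_le_right _ _) (min_le_right _ _)
    calc α * δ ≤ α * (d₂ / α) := mul_le_mul_of_nonneg_left h1 (le_of_lt hα0)
      _ = d₂ := by field_simp
      _ ≤ _ := hd₂S s (Finset.mem_Icc.mpr ⟨hs, hsT⟩)
  -- competitor
  set A : Matrix (Fin n) (Fin n) ℝ := fun a b => Pstar t a b + δ * cnt a b with hA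
  set B : Matrix (Fin n) (Fin n) ℝ := fun a b => Pstar (t+1) a b - α * δ * cnt a b with hB
  set X : ℕ → Matrix (Fin n) (Fin n) ℝ := upd Pstar t A with hX
  set Q : ℕ → Matrix (Fin n) (Fin n) ℝ := upd X (t+1) B with hQ
  have hQt : Q t = A := by rw [hQ, upd_ne X (t+1) B (by omega), hX, upd_self]
  have hQt1 : Q (t+1) = B := by rw [hQ, upd_self]
  have hQne : ∀ s, s ≠ t → s ≠ t+1 → Q s = Pstar s := by
    intro s h1 h2
    rw [hQ, upd_ne X (t+1) B h2, hX, upd_ne Pstar t A h1]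
  have hXt1 : X (t+1) = Pstar (t+1) := upd_ne Pstar t A (by omega)
  -- resLiab facts
  have hRle : ∀ s, s ≤ t → resLiab α Pbar Q s = resLiab α Pbar Pstar s := by
    intro s hs
    apply resLiab_congr
    intro k hk
    exact hQne k (by omega) (by omega)
  have hRX : ∀ s, t < s → ∀ a b, resLiab α Pbar X s a b
      = resLiab α Pbar Pstar s a b - α ^ (s - t) * (δ * cnt a b) := by
    intro s hs a b
    rw [hX, resLiab_upd_gt α Pbar Pstar t A s hs a b]
    have : A a b - Pstar t a b = δ * cnt a b := by rw [hA]; ring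
    rw [this]
  have hRt1 : ∀ a b, resLiab α Pbar Q (t+1) a b
      = resLiab α Pbar Pstar (t+1) a b - α * (δ * cnt a b) := by
    intro a b
    have h1 : resLiab α Pbar Q (t+1) = resLiab α Pbar X (t+1) := by
      apply resLiab_congr
      intro k hk
      rw [hQ, upd_ne X (t+1) B (by omega)]
    rw [h1, hRX (t+1) (by omega) a b]
    have : t + 1 - t = 1 := by omega
    rw [this]
    ring
  have hRgt : ∀ s, t+2 ≤ s → ∀ a b, resLiab α Pbar Q s a b = resLiab α Pbar Pstar s a b := by
    intro s hs a b
    have h1 : resLiab α Pbar Q s a b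
        = resLiab α Pbar X s a b - α ^ (s - (t+1)) * (B a b - X (t+1) a b) := by
      rw [hQ, resLiab_upd_gt α Pbar X (t+1) B s (by omega) a b]
    rw [h1, hRX s (by omega) a b, hXt1]
    have hBd : B a b - Pstar (t+1) a b = -(α * δ * cnt a b) := by rw [hB]; ring
    rw [hBd]
    have hpow : α ^ (s - t) = α ^ (s - (t+1)) * α := by
      rw [← pow_succ]
      congr 1
      omega
    rw [hpow]
    ring
  -- netWorth facts
  have hcolA : ∀ x, (∑ a, A a x) - (∑ a, Pstar t a x) = δ * ci x := by
    intro x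
    have h1 : (∑ a, A a x) = (∑ a, Pstar t a x) + δ * ∑ a, cnt a x := by
      rw [Finset.mul_sum, ← Finset.sum_add_distrib]
    rw [h1, hcolcnt]
    ring
  have hrowA : ∀ x, (∑ b, A x b) - (∑ b, Pstar t x b) = δ * co x := by
    intro x
    have h1 : (∑ b, A x b) = (∑ b, Pstar t x b) + δ * ∑ b, cnt x b := by
      rw [Finset.mul_sum, ← Finset.sum_add_distrib]
    rw [h1, hrowcnt]
    ring
  have hcolB : ∀ x, (∑ a, B a x) - (∑ a, Pstar (t+1) a x) = -(α * δ * ci x) := by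
    intro x
    have h1 : (∑ a, B a x) = (∑ a, Pstar (t+1) a x) - α * δ * ∑ a, cnt a x := by
      rw [Finset.mul_sum, ← Finset.sum_sub_distrib]
    rw [h1, hcolcnt]
    ring
  have hrowB : ∀ x, (∑ b, B x b) - (∑ b, Pstar (t+1) x b) = -(α * δ * co x) := by
    intro x
    have h1 : (∑ b, B x b) = (∑ b, Pstar (t+1) x b) - α * δ * ∑ b, cnt x b := by
      rw [Finset.mul_sum, ← Finset.sum_sub_distrib]
    rw [h1, hrowcnt]
    ring
  have hWle : ∀ s, s ≤ t → netWorth c Q s = netWorth c Pstar s := by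
    intro s hs
    apply netWorth_congr
    intro k hk
    exact hQne k (by omega) (by omega)
  have hWt1 : ∀ x, netWorth c Q (t+1) x = netWorth c Pstar (t+1) x
      + δ * ((if G L = x then (1:ℝ) else 0) - (if G 0 = x then (1:ℝ) else 0)) := by
    intro x
    have h1 : netWorth c Q (t+1) = netWorth c X (t+1) := by
      apply netWorth_congr
      intro k hk
      rw [hQ, upd_ne X (t+1) B (by omega)]
    rw [h1, hX, netWorth_upd_gt c Pstar t A (t+1) (by omega) x]
    rw [hcolA x, hrowA x]
    linear_combination δ * (htele x)
  have hWgt : ∀ s, t+2 ≤ s → ∀ x, netWorth c Q s x = netWorth c Pstar s x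
      - (α - 1) * δ * ((if G L = x then (1:ℝ) else 0) - (if G 0 = x then (1:ℝ) else 0)) := by
    intro s hs x
    have h1 : netWorth c Q s x = netWorth c X s x
        + ((∑ a, B a x) - (∑ a, X (t+1) a x)) - ((∑ b, B x b) - (∑ b, X (t+1) x b)) := by
      rw [hQ, netWorth_upd_gt c X (t+1) B s (by omega) x]
    rw [h1, hXt1, hcolB x, hrowB x, hX, netWorth_upd_gt c Pstar t A s (by omega) x]
    rw [hcolA x, hrowA x]
    linear_combination ((1 - α) * δ) * (htele x)
  -- feasibility
  have feasQ : FeasibleFree T α Pbar e F Q ustar := by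
    intro s hsT
    obtain ⟨f1, f2, f3, f4, f5⟩ := feas s hsT
    refine ⟨?_, f2, ?_, ?_, f5⟩
    · intro a b
      rcases eq_or_ne s t with rfl | hst
      · rw [hQt]
        have h1 := f1 a b
        have h2 : 0 ≤ δ * cnt a b := mul_nonneg (le_of_lt hδ) (hcnt_nonneg a b)
        rw [hA]
        dsimp only
        linarith
      · rcases eq_or_ne s (t+1) with rfl | hst1
        · rw [hQt1, hB]
          dsimp only
          by_cases hc0 : cnt a b = 0
          · rw [hc0]
            have := f1 a b
            simp only [mul_zero]
            linarith
          · have h1 := hδ1 a b hc0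
            have h2 : α * δ * cnt a b ≤ α * δ * L :=
              mul_le_mul_of_nonneg_left (hcnt_le a b) (le_of_lt (mul_pos hα0 hδ))
            linarith
        · rw [hQne s hst hst1]
          exact f1 a b
    · intro a b
      rcases lt_trichotomy s t with hlt | heq | hgt
      · rw [hQne s (by omega) (by omega), hRle s (le_of_lt hlt)]
        exact f3 a b
      · subst heq
        rw [hQt, hRle s (le_refl s), hA]
        dsimp only
        by_cases hc0 : cnt a b = 0
        · rw [hc0]
          have := f3 a b
          simp only [mul_zero]
          linarith
        · -- gap at s: resLiab(s+1) = α (resLiab s - P s), P(s+1) ≤ resLiab(s+1)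
          have hs1T : s + 1 < T := by omega
          have f3' := (feas (s+1) hs1T).2.2.1 a b
          have hrec : resLiab α Pbar Pstar (s+1) a b
              = α * (resLiab α Pbar Pstar s a b - Pstar s a b) := rfl
          have h1 := hδ1 a b hc0
          have h2 : δ * cnt a b ≤ δ * L :=
            mul_le_mul_of_nonneg_left (hcnt_le a b) (le_of_lt hδ)
          -- α * (gap) ≥ P(t+1)ab ≥ α δ L ⟹ gap ≥ δ L
          have h3 : α * δ * L ≤ α * (resLiab α Pbar Pstar s a b - Pstar s a b) := by
            rw [← hrec]
            exact le_trans h1 f3'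
          have h4 : δ * (L:ℝ) ≤ resLiab α Pbar Pstar s a b - Pstar s a b := by
            have := (mul_le_mul_iff_right₀ hα0).mp (by linarith : α * (δ * L) ≤ α * (resLiab α Pbar Pstar s a b - Pstar s a b))
            linarith
          linarith
      · rcases eq_or_ne s (t+1) with rfl | hst1
        · rw [hQt1, hRt1 a b, hB]
          dsimp only
          have := f3 a b
          linarith
        · rw [hQne s (by omega) hst1, hRgt s (by omega) a b]
          exact f3 a b
    · intro x
      rcases Nat.lt_or_ge (s+1) (t+1) with hlt | hge
      · rw [hWle (s+1) (by omega)]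
        exact f4 x
      · have hw := f4 x
        rw [show (fun s i => e s i + ustar s i) = c from rfl] at hw
        rcases eq_or_ne (s+1) (t+1) with heq | hne
        · rw [heq, hWt1 x]
          by_cases hGL : G L = x <;> by_cases hG0 : G 0 = x
          · simp only [hGL, hG0, if_pos]
            rw [heq] at hw
            linarith
          · simp only [if_pos hGL, if_neg hG0]
            rw [heq] at hw
            nlinarith
          · simp only [if_neg hGL, if_pos hG0]
            have : netWorth c Pstar (t+1) x = netWorth c Pstar (t+1) (G 0) := by rw [hG0]
            rw [this]
            nlinarith [hδε]
          · simp only [if_neg hGL, if_neg hG0]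
            rw [heq] at hw
            linarith
        · have hs2 : t + 2 ≤ s + 1 := by omega
          rw [hWgt (s+1) hs2 x]
          by_cases hGL : G L = x <;> by_cases hG0 : G 0 = x
          · simp only [hGL, hG0, if_pos]
            linarith
          · simp only [if_pos hGL, if_neg hG0]
            have hwx : α * δ ≤ netWorth c Pstar (s+1) x := by
              rw [← hGL]
              exact hδ2 (s+1) hs2 (by omega)
            nlinarith
          · simp only [if_neg hGL, if_pos hG0]
            nlinarith
          · simp only [if_neg hGL, if_neg hG0]
            linarith
  -- cost
  set f : ℕ → ℝ := fun s => ∑ a, ∑ b, (resLiab α Pbar Pstar s a b - Pstar s a b) with hf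
  set f' : ℕ → ℝ := fun s => ∑ a, ∑ b, (resLiab α Pbar Q s a b - Q s a b) with hf'
  have htermwise : ∀ s ∈ Finset.range T, f' s ≤ f s + (if s = t then -(δ * L) else 0) := by
    intro s hs
    rcases lt_trichotomy s t with hlt | heq | hgt
    · rw [if_neg (by omega)]
      have h1 : f' s = f s := by
        rw [hf, hf']
        simp only
        rw [hRle s (le_of_lt hlt), hQne s (by omega) (by omega)]
      rw [h1]; simp
    · rw [if_pos heq, heq]
      have h1 : f' t = f t - δ * L := by
        rw [hf, hf']
        simp only
        rw [hRle t (le_refl t), hQt]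
        have h2 : ∀ a b, resLiab α Pbar Pstar t a b - A a b
            = (resLiab α Pbar Pstar t a b - Pstar t a b) - δ * cnt a b := by
          intro a b; rw [hA]; dsimp only; ring
        calc (∑ a, ∑ b, (resLiab α Pbar Pstar t a b - A a b))
            = ∑ a, ∑ b, ((resLiab α Pbar Pstar t a b - Pstar t a b) - δ * cnt a b) :=
              Finset.sum_congr rfl (fun a _ => Finset.sum_congr rfl (fun b _ => h2 a b))
          _ = (∑ a, ∑ b, (resLiab α Pbar Pstar t a b - Pstar t a b))
              - ∑ a, ∑ b, δ * cnt a b := sum2_sub _ _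
          _ = _ := by
              congr 1
              rw [show (∑ a, ∑ b, δ * cnt a b) = δ * ∑ a, ∑ b, cnt a b by
                rw [Finset.mul_sum]
                exact Finset.sum_congr rfl (fun a _ => by rw [Finset.mul_sum])]
              rw [hcnt_total]
      rw [h1]; simp
    · rw [if_neg (by omega)]
      rcases eq_or_ne s (t+1) with heq | hst1
      · rw [heq]
        have h1 : f' (t+1) = f (t+1) := by
          rw [hf, hf']
          simp only
          have h2 : ∀ a b, resLiab α Pbar Q (t+1) a b - Q (t+1) a b
              = resLiab α Pbar Pstar (t+1) a b - Pstar (t+1) a b := by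
            intro a b
            rw [hQt1, hRt1 a b, hB]
            dsimp only
            ring
          exact Finset.sum_congr rfl (fun a _ => Finset.sum_congr rfl (fun b _ => h2 a b))
        rw [h1]; simp
      · have h1 : f' s = f s := by
          rw [hf, hf']
          simp only
          have h2 : ∀ a b, resLiab α Pbar Q s a b - Q s a b
              = resLiab α Pbar Pstar s a b - Pstar s a b := by
            intro a b
            rw [hQne s (by omega) hst1, hRgt s (by omega) a b]
          exact Finset.sum_congr rfl (fun a _ => Finset.sum_congr rfl (fun b _ => h2 a b))
        rw [h1]; simp
  have hS1 : (∑ s ∈ Finset.range T, f' s) ≤ (∑ s ∈ Finset.range T, f s) - δ * L := by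
    calc (∑ s ∈ Finset.range T, f' s)
        ≤ ∑ s ∈ Finset.range T, (f s + (if s = t then -(δ * L) else 0)) :=
          Finset.sum_le_sum htermwise
      _ = (∑ s ∈ Finset.range T, f s) + ∑ s ∈ Finset.range T, (if s = t then -(δ * L) else 0) :=
          Finset.sum_add_distrib
      _ = (∑ s ∈ Finset.range T, f s) - δ * L := by
          rw [Finset.sum_ite_eq' (Finset.range T) t (fun _ => -(δ * L))]
          rw [if_pos (Finset.mem_range.mpr (by omega))]
          ring
  have hS2 : (∑ a, ∑ b, resLiab α Pbar Q T a b) = (∑ a, ∑ b, resLiab α Pbar Pstar T a b) :=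
    Finset.sum_congr rfl (fun a _ => Finset.sum_congr rfl (fun b _ => hRgt T (by omega) a b))
  have hcost : costFree T α η γ Pbar Q ustar < costFree T α η γ Pbar Pstar ustar := by
    unfold costFree
    have h1η : 0 < 1 - η := by linarith
    have hm1 : (1 - η) * (∑ s ∈ Finset.range T, f' s)
        ≤ (1-η) * ((∑ s ∈ Finset.range T, f s) - δ * L) :=
      mul_le_mul_of_nonneg_left hS1 (le_of_lt h1η)
    rw [hf, hf'] at hm1
    simp only at hm1
    rw [hS2]
    have hδL : 0 < δ * L := mul_pos hδ hL0
    nlinarith [mul_pos h1η hδL]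
  have := hopt.2 Q ustar feasQ
  linarith

end Stmt9

open Stmt9 in
theorem stmt9_unpaid_zero_worth_free (n T : ℕ) (hn : 1 ≤ n) (hT : 1 ≤ T)
    (α : ℝ) (hα : 1 ≤ α)
    (Pbar : Matrix (Fin n) (Fin n) ℝ)
    (hPbar : ∀ i j, 0 ≤ Pbar i j) (hPdiag : ∀ i, Pbar i i = 0)
    (e : ℕ → Fin n → ℝ) (he : ∀ t, t < T → ∀ i, 0 ≤ e t i)
    (F : ℕ → ℝ) (hF : ∀ t, 0 ≤ F t) (hFmono : ∀ s t, s ≤ t → F s ≤ F t)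
    (η γ : ℝ) (hη0 : 0 ≤ η) (hη1 : η < 1) (hγ : 0 < γ)
    (Pstar : ℕ → Matrix (Fin n) (Fin n) ℝ) (ustar : ℕ → Fin n → ℝ)
    (hopt : OptimalFree T α η γ Pbar e F Pstar ustar) :
    ∀ i : Fin n, ∀ t, t < T →
      (∑ j, Pstar t i j) < (∑ j, resLiab α Pbar Pstar t i j) →
      netWorth (fun s i => e s i + ustar s i) Pstar (t + 1) i = 0 := by
  classical
  have hα0 : (0:ℝ) < α := lt_of_lt_of_le one_pos hα
  set c : ℕ → Fin n → ℝ := fun s i => e s i + ustar s i with hc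
  have feas := hopt.1
  have hwnn : ∀ s, s < T → ∀ x, 0 ≤ netWorth c Pstar (s+1) x := by
    intro s hs x
    exact (feas s hs).2.2.2.1 x
  have hPnn : ∀ s, s < T → ∀ a b, 0 ≤ Pstar s a b := fun s hs => (feas s hs).1
  have hPle : ∀ s, s < T → ∀ a b, Pstar s a b ≤ resLiab α Pbar Pstar s a b :=
    fun s hs => (feas s hs).2.2.1
  have hcnn : ∀ s, s < T → ∀ x, 0 ≤ c s x := by
    intro s hs x
    exact add_nonneg (he s hs x) ((feas s hs).2.1 x)
  -- monotonicity of wealth without outflows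
  have h_mono : ∀ (x : Fin n) (a : ℕ), ∀ b, a ≤ b → b ≤ T →
      (∀ k, a ≤ k → k < b → ∀ jj, Pstar k x jj = 0) →
      netWorth c Pstar a x ≤ netWorth c Pstar b x := by
    intro x a b
    induction b with
    | zero =>
        intro h1 _ _
        have : a = 0 := by omega
        rw [this]
    | succ b ih =>
        intro h1 h2 h3
        rcases eq_or_lt_of_le h1 with heq | hlt
        · rw [← heq]
        · have hab : a ≤ b := by omega
          have hb := ih hab (by omega) (fun k hk1 hk2 => h3 k hk1 (by omega))
          have hstep : netWorth c Pstar (b+1) x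
              = netWorth c Pstar b x + c b x + (∑ j, Pstar b j x) - (∑ j, Pstar b x j) := rfl
          have hout : (∑ j, Pstar b x j) = 0 :=
            Finset.sum_eq_zero (fun jj _ => h3 b hab (by omega) jj)
          have hin : 0 ≤ (∑ j, Pstar b j x) :=
            Finset.sum_nonneg (fun jj _ => hPnn b (by omega) jj x)
          have hcb : 0 ≤ c b x := hcnn b (by omega) x
          rw [hstep, hout]
          linarith
  -- violation predicate
  set Viol : ℕ → Prop := fun t' =>
    ∃ x, (∑ jj, Pstar t' x jj) < (∑ jj, resLiab α Pbar Pstar t' x jj)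
      ∧ 0 < netWorth c Pstar (t'+1) x with hViol
  -- first-outflow violation
  have h_fv : ∀ (t' : ℕ), t' < T → ∀ (x : Fin n),
      0 < netWorth c Pstar (t'+2) x →
      (∃ k, (t'+2 ≤ k ∧ k < T) ∧ ∃ jj, 0 < Pstar k x jj) →
      ∃ t'', t' < t'' ∧ t'' < T ∧ Viol t'' := by
    intro t' ht' x hwx hex
    set S : Finset ℕ := (Finset.Ico (t'+2) T).filter (fun k => ∃ jj, 0 < Pstar k x jj) with hS
    have hSne : S.Nonempty := by
      obtain ⟨k, ⟨hk1, hk2⟩, hjj⟩ := hex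
      exact ⟨k, by rw [hS]; exact Finset.mem_filter.mpr ⟨Finset.mem_Ico.mpr ⟨hk1, hk2⟩, hjj⟩⟩
    set k₀ : ℕ := S.min' hSne with hk₀
    have hk₀mem : k₀ ∈ S := Finset.min'_mem S hSne
    have hk₀Ico : t'+2 ≤ k₀ ∧ k₀ < T := by
      have := Finset.mem_filter.mp hk₀mem
      exact Finset.mem_Ico.mp this.1
    obtain ⟨jj₀, hjj₀⟩ := (Finset.mem_filter.mp hk₀mem).2
    have hnobefore : ∀ k, t'+2 ≤ k → k < k₀ → ∀ jj, Pstar k x jj = 0 := by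
      intro k h1 h2 jj
      have hknotin : k ∉ S := by
        intro hkin
        have := Finset.min'_le S k hkin
        omega
      have hkT : k < T := by omega
      rw [hS] at hknotin
      rw [Finset.mem_filter] at hknotin
      push_neg at hknotin
      have := hknotin (Finset.mem_Ico.mpr ⟨h1, hkT⟩)
      exact le_antisymm (this jj) (hPnn k hkT x jj)
    have hwk₀ : 0 < netWorth c Pstar k₀ x :=
      lt_of_lt_of_le hwx (h_mono x (t'+2) k₀ hk₀Ico.1 (by omega) hnobefore)
    -- violation at k₀ - 1
    have hk₀pos : 1 ≤ k₀ := by omega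
    have hk₁T : k₀ - 1 < T := by omega
    have hrec : resLiab α Pbar Pstar k₀ x jj₀
        = α * (resLiab α Pbar Pstar (k₀-1) x jj₀ - Pstar (k₀-1) x jj₀) := by
      have : k₀ = (k₀ - 1) + 1 := by omega
      rw [this]
      rfl
    have hgap₀ : Pstar (k₀-1) x jj₀ < resLiab α Pbar Pstar (k₀-1) x jj₀ := by
      have h1 : Pstar k₀ x jj₀ ≤ resLiab α Pbar Pstar k₀ x jj₀ := hPle k₀ hk₀Ico.2 x jj₀
      have h2 : 0 < resLiab α Pbar Pstar k₀ x jj₀ := lt_of_lt_of_le hjj₀ h1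
      rw [hrec] at h2
      nlinarith
    refine ⟨k₀ - 1, by omega, hk₁T, x, ?_, ?_⟩
    · apply Finset.sum_lt_sum (fun jj _ => hPle (k₀-1) hk₁T x jj)
      exact ⟨jj₀, Finset.mem_univ jj₀, hgap₀⟩
    · have : k₀ - 1 + 1 = k₀ := by omega
      rw [this]
      exact hwk₀
  -- the key step
  have key : ∀ t', t' < T → (∀ t'', t' < t'' → t'' < T → ¬ Viol t'') → ¬ Viol t' := by
    intro t' ht' IH hV
    obtain ⟨i, hgap, hw⟩ := hV
    have hgapj : ∃ j, Pstar t' i j < resLiab α Pbar Pstar t' i j := by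
      by_contra hno
      push_neg at hno
      exact absurd (Finset.sum_le_sum (fun jj _ => hno jj)) (not_le.mpr hgap)
    obtain ⟨j, hgapj⟩ := hgapj
    rcases Nat.lt_or_ge (t'+1) T with hT2 | hT1
    · -- t' + 2 ≤ T
      have ht2 : t' + 2 ≤ T := by omega
      by_cases hm : ∃ m, 0 < Pstar (t'+1) i m
      · obtain ⟨m, hm⟩ := hm
        set Cz : Fin n → Prop := fun v => netWorth c Pstar (t'+2) v = 0 with hCz
        set stp : Fin n → Fin n → Prop :=
          fun a b => Cz a ∧ 0 < Pstar (t'+1) a b with hstp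
        set R : Fin n → Prop := fun v =>
          ∃ k, ∃ Fn : ℕ → Fin n, Fn 0 = m ∧ Fn k = v ∧ ∀ q, q < k → stp (Fn q) (Fn (q+1)) with hR
        have hRm : R m := ⟨0, fun _ => m, rfl, rfl, by omega⟩
        by_cases hexit : ∃ b, R b ∧ ¬ Cz b
        · obtain ⟨b, hRb, hbC⟩ := hexit
          obtain ⟨k, Fn, hF0, hFk, hFstep⟩ := hRb
          have hwb2 : 0 < netWorth c Pstar (t'+2) b := by
            have h1 : 0 ≤ netWorth c Pstar (t'+2) b := hwnn (t'+1) (by omega) b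
            rcases lt_or_eq_of_le h1 with h | h
            · exact h
            · exact absurd h.symm hbC
          by_cases hbzero : ∃ s, t'+2 < s ∧ s ≤ T ∧ netWorth c Pstar s b = 0
          · obtain ⟨s₀, hs1, hs2, hs3⟩ := hbzero
            have hout : ∃ k', (t'+2 ≤ k' ∧ k' < T) ∧ ∃ jj, 0 < Pstar k' b jj := by
              by_contra hno
              push_neg at hno
              have hrows : ∀ k', t'+2 ≤ k' → k' < s₀ → ∀ jj, Pstar k' b jj = 0 := by
                intro k' h1 h2 jj
                have hk'T : k' < T := by omega
                have := hno k' ⟨h1, hk'T⟩ jj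
                exact le_antisymm this (hPnn k' hk'T b jj)
              have := h_mono b (t'+2) s₀ (by omega) hs2 hrows
              linarith
            obtain ⟨t'', h1, h2, h3⟩ := h_fv t' ht' b hwb2 hout
            exact IH t'' h1 h2 h3
          · push_neg at hbzero
            have hbtype : ∀ s, t'+2 ≤ s → s ≤ T → 0 < netWorth c Pstar s b := by
              intro s h1 h2
              rcases eq_or_lt_of_le h1 with heq | hlt
              · rw [← heq]; exact hwb2
              · have hge : 0 ≤ netWorth c Pstar s b := by
                  have : s = (s-1) + 1 := by omega
                  rw [this]
                  exact hwnn (s-1) (by omega) b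
                rcases lt_or_eq_of_le hge with h | h
                · exact h
                · exact absurd h.symm (hbzero s hlt h2)
            -- build chain
            set G : ℕ → Fin n := fun q => Nat.casesOn q i Fn with hG
            have hG0 : G 0 = i := rfl
            have hGs : ∀ q, G (q+1) = Fn q := fun q => rfl
            have hedge : ∀ q, q < k + 1 → 0 < Pstar (t'+1) (G q) (G (q+1)) := by
              intro q hq
              rcases Nat.eq_zero_or_pos q with rfl | hqpos
              · rw [hG0, hGs 0, hF0]
                exact hm
              · have hq' : q - 1 < k := by omega
                have := (hFstep (q-1) hq').2
                have hq1 : q = (q-1) + 1 := by omega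
                rw [hq1, hGs (q-1), hGs ((q-1)+1)]
                have hq2 : q - 1 + 1 = q := by omega
                rw [hq2]
                rw [hq1] at this ⊢
                exact this
            have hterm : ∀ s, t'+2 ≤ s → s ≤ T → 0 < netWorth c Pstar s (G (k+1)) := by
              intro s h1 h2
              rw [hGs k, hFk]
              exact hbtype s h1 h2
            exact chain_contra T α η γ hα hη0 hη1 Pbar e F Pstar ustar hopt t' ht2
              (k+1) (by omega) G hedge (by rw [hG0]; exact hw) hterm
        · push_neg at hexit
          set Rf : Finset (Fin n) := Finset.univ.filter (fun v => R v) with hRf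
          have hmemR : ∀ v, v ∈ Rf ↔ R v := by
            intro v
            rw [hRf]
            simp
          have hclosed : ∀ v, v ∈ Rf → ∀ b, 0 < Pstar (t'+1) v b → b ∈ Rf := by
            intro v hv b hpb
            have hRv := (hmemR v).mp hv
            have hCv : Cz v := hexit v hRv
            obtain ⟨k, Fn, h0, hk, hst⟩ := hRv
            refine (hmemR b).mpr ⟨k+1, (fun q => if q ≤ k then Fn q else b), ?_, ?_, ?_⟩
            · simp [h0]
            · simp
            · intro q hq
              dsimp only
              rcases Nat.lt_or_ge q k with hqk | hqk
              · have e1 : (if q ≤ k then Fn q else b) = Fn q := if_pos (by omega)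
                have e2 : (if q + 1 ≤ k then Fn (q+1) else b) = Fn (q+1) := if_pos (by omega)
                rw [e1, e2]
                exact hst q hqk
              · have hqeq : q = k := by omega
                subst hqeq
                have e1 : (if q ≤ q then Fn q else b) = Fn q := if_pos (le_refl q)
                have e2 : (if q + 1 ≤ q then Fn (q+1) else b) = b := if_neg (by omega)
                rw [e1, e2, hk]
                exact ⟨hCv, hpb⟩
          have hmRf : m ∈ Rf := (hmemR m).mpr hRm
          have hzero_off : ∀ v ∈ Rf, ∀ b, b ∉ Rf → Pstar (t'+1) v b = 0 := by
            intro v hv b hb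
            by_contra hne
            have hpos : 0 < Pstar (t'+1) v b :=
              lt_of_le_of_ne (hPnn (t'+1) (by omega) v b) (Ne.symm hne)
            exact hb (hclosed v hv b hpos)
          -- the sum contradiction
          have hsum0 : ∑ v ∈ Rf, netWorth c Pstar (t'+2) v = 0 :=
            Finset.sum_eq_zero (fun v hv => hexit v ((hmemR v).mp hv))
          have hexp : ∑ v ∈ Rf, netWorth c Pstar (t'+2) v
              = (∑ v ∈ Rf, netWorth c Pstar (t'+1) v) + (∑ v ∈ Rf, c (t'+1) v)
                + (∑ v ∈ Rf, ∑ a, Pstar (t'+1) a v) - (∑ v ∈ Rf, ∑ bb, Pstar (t'+1) v bb) := by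
            have h1 : ∀ v ∈ Rf, netWorth c Pstar (t'+2) v
                = netWorth c Pstar (t'+1) v + c (t'+1) v
                  + (∑ a, Pstar (t'+1) a v) - (∑ bb, Pstar (t'+1) v bb) := fun v _ => rfl
            rw [Finset.sum_congr rfl h1, Finset.sum_sub_distrib, Finset.sum_add_distrib,
              Finset.sum_add_distrib]
          have hOUT : (∑ v ∈ Rf, ∑ bb, Pstar (t'+1) v bb)
              = ∑ v ∈ Rf, ∑ bb ∈ Rf, Pstar (t'+1) v bb := by
            apply Finset.sum_congr rfl
            intro v hv
            rw [eq_comm]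
            apply Finset.sum_subset (Finset.subset_univ Rf)
            intro bb _ hbb
            exact hzero_off v hv bb hbb
          have hINT : (∑ v ∈ Rf, ∑ a ∈ Rf, Pstar (t'+1) a v)
              = ∑ v ∈ Rf, ∑ bb ∈ Rf, Pstar (t'+1) v bb := Finset.sum_comm
          have hW1 : 0 ≤ ∑ v ∈ Rf, netWorth c Pstar (t'+1) v :=
            Finset.sum_nonneg (fun v _ => hwnn t' ht' v)
          have hC1 : 0 ≤ ∑ v ∈ Rf, c (t'+1) v :=
            Finset.sum_nonneg (fun v _ => hcnn (t'+1) (by omega) v)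
          by_cases hiR : i ∈ Rf
          · have hWi : netWorth c Pstar (t'+1) i ≤ ∑ v ∈ Rf, netWorth c Pstar (t'+1) v :=
              Finset.single_le_sum (fun v _ => hwnn t' ht' v) hiR
            have hIN : (∑ v ∈ Rf, ∑ a ∈ Rf, Pstar (t'+1) a v)
                ≤ ∑ v ∈ Rf, ∑ a, Pstar (t'+1) a v := by
              apply Finset.sum_le_sum
              intro v _
              apply Finset.sum_le_sum_of_subset_of_nonneg (Finset.subset_univ Rf)
              intro a _ _
              exact hPnn (t'+1) (by omega) a v
            rw [hsum0] at hexp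
            rw [hOUT, ← hINT] at hexp
            linarith
          · have hIN : (∑ v ∈ Rf, ∑ a ∈ Rf, Pstar (t'+1) a v) + Pstar (t'+1) i m
                ≤ ∑ v ∈ Rf, ∑ a, Pstar (t'+1) a v := by
              have hlb : ∀ v ∈ Rf, (∑ a ∈ Rf, Pstar (t'+1) a v)
                  + (if v = m then Pstar (t'+1) i m else 0) ≤ ∑ a, Pstar (t'+1) a v := by
                intro v hv
                by_cases hvm : v = m
                · rw [if_pos hvm]
                  have h1 : (∑ a ∈ insert i Rf, Pstar (t'+1) a v)
                      = Pstar (t'+1) i v + ∑ a ∈ Rf, Pstar (t'+1) a v :=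
                    Finset.sum_insert hiR
                  have h2 : (∑ a ∈ insert i Rf, Pstar (t'+1) a v) ≤ ∑ a, Pstar (t'+1) a v := by
                    apply Finset.sum_le_sum_of_subset_of_nonneg (Finset.subset_univ _)
                    intro a _ _
                    exact hPnn (t'+1) (by omega) a v
                  rw [hvm]
                  rw [hvm] at h1 h2
                  linarith
                · rw [if_neg hvm]
                  simp only [add_zero]
                  apply Finset.sum_le_sum_of_subset_of_nonneg (Finset.subset_univ _)
                  intro a _ _
                  exact hPnn (t'+1) (by omega) a v
              calc (∑ v ∈ Rf, ∑ a ∈ Rf, Pstar (t'+1) a v) + Pstar (t'+1) i m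
                  = ∑ v ∈ Rf, ((∑ a ∈ Rf, Pstar (t'+1) a v)
                      + (if v = m then Pstar (t'+1) i m else 0)) := by
                    rw [Finset.sum_add_distrib]
                    congr 1
                    rw [Finset.sum_ite_eq' Rf m (fun _ => Pstar (t'+1) i m)]
                    rw [if_pos hmRf]
                _ ≤ _ := Finset.sum_le_sum hlb
            rw [hsum0] at hexp
            rw [hOUT, ← hINT] at hexp
            linarith
      · -- no outflow at t'+1
        push_neg at hm
        have hrow1 : ∀ mm, Pstar (t'+1) i mm = 0 :=
          fun mm => le_antisymm (hm mm) (hPnn (t'+1) (by omega) i mm)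
        have hw2 : 0 < netWorth c Pstar (t'+2) i := by
          have := h_mono i (t'+1) (t'+2) (by omega) (by omega)
            (fun kk h1 h2 jj => by
              have : kk = t'+1 := by omega
              rw [this]
              exact hrow1 jj)
          linarith
        by_cases hout : ∃ k', (t'+2 ≤ k' ∧ k' < T) ∧ ∃ jj, 0 < Pstar k' i jj
        · obtain ⟨t'', h1, h2, h3⟩ := h_fv t' ht' i hw2 hout
          exact IH t'' h1 h2 h3
        · push_neg at hout
          have hrows : ∀ s, t' < s → s < T → ∀ jj, Pstar s i jj = 0 := by
            intro s h1 h2 jj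
            rcases eq_or_lt_of_le (by omega : t' + 1 ≤ s) with heq | hlt
            · rw [← heq]; exact hrow1 jj
            · have := hout s ⟨by omega, h2⟩ jj
              exact le_antisymm this (hPnn s h2 i jj)
          have hres : ∀ s, t' < s → s < T → 0 < resLiab α Pbar Pstar s i j := by
            intro s
            induction s with
            | zero => omega
            | succ s ih =>
                intro h1 h2
                rcases Nat.lt_or_ge t' s with hlt | hge
                · have hz : Pstar s i j = 0 := hrows s hlt (by omega) j
                  have hr := ih hlt (by omega)
                  show 0 < α * (resLiab α Pbar Pstar s i j - Pstar s i j)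
                  rw [hz]
                  have : (0:ℝ) < resLiab α Pbar Pstar s i j := hr
                  nlinarith
                · have heq : s = t' := by omega
                  subst heq
                  show 0 < α * (resLiab α Pbar Pstar s i j - Pstar s i j)
                  nlinarith [hgapj]
          have hwpos : ∀ s, t' < s → s ≤ T → 0 < netWorth c Pstar s i := by
            intro s h1 h2
            have := h_mono i (t'+1) s (by omega) h2
              (fun kk hk1 hk2 jj => hrows kk (by omega) (by omega) jj)
            linarith
          exact prepay_contra T α η γ hα hη0 hη1 Pbar e F Pstar ustar hopt t' ht' i j
            hgapj (fun s h1 h2 => hrows s h1 h2 j) hres hwpos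
    · -- t' = T - 1
      exact prepay_contra T α η γ hα hη0 hη1 Pbar e F Pstar ustar hopt t' ht' i j
        hgapj (fun s h1 h2 => absurd h2 (by omega)) (fun s h1 h2 => absurd h2 (by omega))
        (fun s h1 h2 => by
          have : s = t' + 1 := by omega
          rw [this]
          exact hw)
  -- downward induction
  have noviol : ∀ k t', t' < T → T - t' ≤ k → ¬ Viol t' := by
    intro k
    induction k with
    | zero => intro t' h1 h2; omega
    | succ k ih =>
        intro t' h1 h2
        exact key t' h1 (fun t'' ht'' hT'' => ih t'' hT'' (by omega))
  intro i t ht hgap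
  by_contra hne
  have hpos : 0 < netWorth c Pstar (t+1) i :=
    lt_of_le_of_ne (hwnn t ht i) (Ne.symm hne)
  exact noviol (T - t) t ht (le_refl _) ⟨i, hgap, hpos⟩
end
end

section
/- Let ([P*],[u*]) be an optimal process for the free-payments control problem with η∈[0,1) and γ>0. A node whose liabilities have been fully paid by period t receives no further cash injections: if p̄*_i(t)=0, where p̄*(t)=P̄*(t)1 is the residual liability vector generated by the optimal process, then u*_i(s)=0 for all s∈{t,…,T−1}. -/
open Finset

noncomputable section

theorem stmt10_paid_no_injection_free (n T : ℕ) (hn : 1 ≤ n) (hT : 1 ≤ T)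
    (α : ℝ) (hα : 1 ≤ α)
    (Pbar : Matrix (Fin n) (Fin n) ℝ)
    (hPbar : ∀ i j, 0 ≤ Pbar i j) (hPdiag : ∀ i, Pbar i i = 0)
    (e : ℕ → Fin n → ℝ) (he : ∀ t, t < T → ∀ i, 0 ≤ e t i)
    (F : ℕ → ℝ) (hF : ∀ t, 0 ≤ F t) (hFmono : ∀ s t, s ≤ t → F s ≤ F t)
    (η γ : ℝ) (hη0 : 0 ≤ η) (hη1 : η < 1) (hγ : 0 < γ)
    (Pstar : ℕ → Matrix (Fin n) (Fin n) ℝ) (ustar : ℕ → Fin n → ℝ)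
    (hopt : OptimalFree T α η γ Pbar e F Pstar ustar) :
    ∀ i : Fin n, ∀ t, t < T →
      (∑ j, resLiab α Pbar Pstar t i j) = 0 →
      ∀ s, t ≤ s → s < T → ustar s i = 0 := by
  intro i t ht hrow s hts hsT
  obtain ⟨hfeas, hopt2⟩ := hopt
  -- nonnegativity of residual liabilities up to time T
  have hRnn : ∀ τ, τ ≤ T → ∀ a b, 0 ≤ resLiab α Pbar Pstar τ a b := by
    intro τ
    induction τ with
    | zero => intro _ a b; exact hPbar a b
    | succ m ih =>
      intro hm a b
      have hmT : m < T := hm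
      obtain ⟨hP0, _, hPle, _, _⟩ := hfeas m hmT
      have h1 : 0 ≤ resLiab α Pbar Pstar m a b - Pstar m a b :=
        sub_nonneg.mpr (hPle a b)
      have : resLiab α Pbar Pstar (m + 1) a b
          = α * (resLiab α Pbar Pstar m a b - Pstar m a b) := rfl
      rw [this]
      exact mul_nonneg (by linarith) h1
  -- the residual liabilities of node i are zero from time t on
  have hRzero : ∀ m, t ≤ m → m ≤ T → ∀ j, resLiab α Pbar Pstar m i j = 0 := by
    intro m htm
    induction m, htm using Nat.le_induction with
    | base =>
      intro hmT j
      have hnn : ∀ j ∈ Finset.univ, (0:ℝ) ≤ resLiab α Pbar Pstar t i j :=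
        fun j _ => hRnn t (le_of_lt ht) i j
      exact (Finset.sum_eq_zero_iff_of_nonneg hnn).mp hrow j (Finset.mem_univ j)
    | succ m hm ih =>
      intro hmT j
      have hmT' : m < T := hmT
      obtain ⟨hP0, _, hPle, _, _⟩ := hfeas m hmT'
      have hRm : resLiab α Pbar Pstar m i j = 0 := ih (le_of_lt hmT') j
      have hPm : Pstar m i j = 0 :=
        le_antisymm (by rw [← hRm]; exact hPle i j) (hP0 i j)
      show α * (resLiab α Pbar Pstar m i j - Pstar m i j) = 0
      rw [hRm, hPm]; ring
  -- node i makes no payments from time t on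
  have hPzero : ∀ m, t ≤ m → m < T → ∀ j, Pstar m i j = 0 := by
    intro m htm hmT j
    obtain ⟨hP0, _, hPle, _, _⟩ := hfeas m hmT
    have := hRzero m htm (le_of_lt hmT) j
    exact le_antisymm (by rw [← this]; exact hPle i j) (hP0 i j)
  set δ := ustar s i with hδ
  have hδnn : 0 ≤ δ := (hfeas s hsT).2.1 i
  -- modified injection plan
  set u' : ℕ → Fin n → ℝ := fun k j => if k = s ∧ j = i then 0 else ustar k j with hu'
  have hu'val : ∀ k j, u' k j = ustar k j - (if k = s ∧ j = i then δ else 0) := by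
    intro k j
    simp only [hu']
    split_ifs with h
    · rw [hδ, h.1, h.2]; ring
    · ring
  set c : ℕ → Fin n → ℝ := fun k j => e k j + ustar k j with hc
  set c' : ℕ → Fin n → ℝ := fun k j => e k j + u' k j with hc'
  -- net worth shift
  have hwshift : ∀ τ j, netWorth c' Pstar τ j
      = netWorth c Pstar τ j - (if j = i ∧ s < τ then δ else 0) := by
    intro τ
    induction τ with
    | zero => intro j; simp [netWorth]
    | succ m ih =>
      intro j
      show netWorth c' Pstar m j + c' m j + (∑ k, Pstar m k j) - (∑ k, Pstar m j k) = _
      rw [ih j]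
      have hcc : c' m j = c m j - (if m = s ∧ j = i then δ else 0) := by
        simp only [hc', hc]
        rw [hu'val m j]; ring
      rw [hcc]
      have hind : (if j = i ∧ s < m then δ else 0) + (if m = s ∧ j = i then δ else 0)
          = (if j = i ∧ s < m + 1 then δ else 0) := by
        by_cases hj : j = i
        · simp only [hj, and_true, true_and]
          by_cases hsm : s < m
          · rw [if_pos hsm, if_neg (by omega), if_pos (by omega)]; ring
          · by_cases hms : m = s
            · rw [if_neg hsm, if_pos hms, if_pos (by omega)]; ring
            · rw [if_neg hsm, if_neg hms, if_neg (by omega)]; ring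
        · simp [hj]
      show _ = netWorth c Pstar m j + c m j + (∑ k, Pstar m k j) - (∑ k, Pstar m j k)
        - (if j = i ∧ s < m + 1 then δ else 0)
      rw [← hind]; ring
  -- budget shift
  have hbshift : ∀ τ, budget u' τ = budget ustar τ - (if s ≤ τ then δ else 0) := by
    intro τ
    unfold budget
    have hrowu : ∀ k, (∑ j, u' k j) = (∑ j, ustar k j) - (if k = s then δ else 0) := by
      intro k
      have : (∑ j, u' k j) = ∑ j, (ustar k j - (if k = s ∧ j = i then δ else 0)) := by
        exact Finset.sum_congr rfl fun j _ => hu'val k j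
      rw [this, Finset.sum_sub_distrib]
      congr 1
      by_cases hk : k = s
      · simp [hk]
      · simp [hk]
    calc (∑ k ∈ range (τ + 1), ∑ j, u' k j)
        = ∑ k ∈ range (τ + 1), ((∑ j, ustar k j) - (if k = s then δ else 0)) :=
          Finset.sum_congr rfl fun k _ => hrowu k
      _ = (∑ k ∈ range (τ + 1), ∑ j, ustar k j)
          - ∑ k ∈ range (τ + 1), (if k = s then δ else 0) := Finset.sum_sub_distrib _ _
      _ = _ := by
          congr 1
          rw [Finset.sum_ite_eq' (range (τ + 1)) s (fun _ => δ)]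
          simp only [Finset.mem_range]
          congr 1
          simp [Nat.lt_succ_iff]
  -- lower bound on net worth of i after injection at time s
  have hkey : ∀ m, s ≤ m → m < T → δ ≤ netWorth c Pstar (m + 1) i := by
    intro m hsm
    induction m, hsm using Nat.le_induction with
    | base =>
      intro hsT'
      obtain ⟨hP0, hu0, _, _, _⟩ := hfeas s hsT'
      have hws : 0 ≤ netWorth c Pstar s i := by
        cases s with
        | zero => exact le_of_eq rfl
        | succ r =>
          have hrT : r < T := lt_trans (Nat.lt_succ_self r) hsT'
          exact ((hfeas r hrT).2.2.2.1) i
      have hout : (∑ k, Pstar s i k) = 0 :=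
        Finset.sum_eq_zero fun k _ => hPzero s hts hsT' k
      have hin : 0 ≤ (∑ k, Pstar s k i) :=
        Finset.sum_nonneg fun k _ => hP0 k i
      have hce : 0 ≤ e s i := he s hsT' i
      show δ ≤ netWorth c Pstar s i + c s i + (∑ k, Pstar s k i) - (∑ k, Pstar s i k)
      have : c s i = e s i + ustar s i := rfl
      rw [hout, this, ← hδ]
      linarith
    | succ m hm ih =>
      intro hmT
      have hmT' : m < T := lt_trans (Nat.lt_succ_self m) hmT
      obtain ⟨hP0, hu0, _, _, _⟩ := hfeas (m + 1) hmT
      have hout : (∑ k, Pstar (m + 1) i k) = 0 :=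
        Finset.sum_eq_zero fun k _ => hPzero (m + 1) (le_trans hts (le_trans hm (Nat.le_succ m))) hmT k
      have hin : 0 ≤ (∑ k, Pstar (m + 1) k i) :=
        Finset.sum_nonneg fun k _ => hP0 k i
      have hcnn : 0 ≤ c (m + 1) i := add_nonneg (he (m + 1) hmT i) (hu0 i)
      have ihm := ih hmT'
      show δ ≤ netWorth c Pstar (m + 1) i + c (m + 1) i
        + (∑ k, Pstar (m + 1) k i) - (∑ k, Pstar (m + 1) i k)
      rw [hout]
      linarith
  -- feasibility of the modified process
  have hfeas' : FeasibleFree T α Pbar e F Pstar u' := by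
    intro τ hτT
    obtain ⟨hP0, hu0, hPle, hw, hb⟩ := hfeas τ hτT
    refine ⟨hP0, ?_, hPle, ?_, ?_⟩
    · intro j
      simp only [hu']
      split_ifs with h
      · exact le_rfl
      · exact hu0 j
    · intro j
      have := hwshift (τ + 1) j
      show 0 ≤ netWorth c' Pstar (τ + 1) j
      rw [this]
      by_cases hji : j = i ∧ s < τ + 1
      · have hsl : s ≤ τ := Nat.lt_succ_iff.mp hji.2
        have := hkey τ hsl hτT
        rw [if_pos hji, hji.1]
        linarith
      · rw [if_neg hji]
        have : 0 ≤ netWorth c Pstar (τ + 1) j := hw j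
        linarith
    · rw [hbshift τ]
      split_ifs with h
      · linarith
      · simpa using hb
  -- cost comparison
  have hcost := hopt2 Pstar u' hfeas'
  have hcosteq : costFree T α η γ Pbar Pstar u'
      = costFree T α η γ Pbar Pstar ustar - γ * δ := by
    unfold costFree
    rw [hbshift (T - 1)]
    have hsle : s ≤ T - 1 := Nat.le_sub_one_of_lt hsT
    rw [if_pos hsle]
    ring
  rw [hcosteq] at hcost
  have : γ * δ ≤ 0 := by linarith
  have hδle : δ ≤ 0 := by nlinarith
  exact le_antisymm hδle hδnn
end
end

section
/- In the robust pro-rata setting with affine policies p(k)=p̂(k)+Θ(k)d(k) and u(k)=û(k)+Γ(k)d(k), where the net worth is w(t+1)=Σ_{k=0}^{t}( ê(k)+d(k)+û(k)+Γ(k)d(k) + Aᵀp(k) − p(k) ), for every period t∈{0,…,T−1} and every node i, the minimum over disturbance sequences [d]∈𝒟 of w_i(t+1) equals ŵ_i(t+1) − Σ_{k=0}^{t} ( |I + Γ(k) + (Aᵀ−I)Θ(k)| r(k) )_i, where ŵ(t+1)=Σ_{k=0}^{t}( ê(k)+û(k)+Aᵀp̂(k)−p̂(k) ); moreover this minimum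 is attained. -/
open Finset

private lemma expand_key (n : ℕ) (A Θ Γ : Matrix (Fin n) (Fin n) ℝ) (d : Fin n → ℝ)
    (e u p : Fin n → ℝ) (i : Fin n) :
    (e i + d i + (u i + ∑ j, Γ i j * d j)
      + (∑ j, A j i * (p j + ∑ l, Θ j l * d l))
      - (p i + ∑ j, Θ i j * d j))
    = (e i + u i + (∑ j, A j i * p j) - p i)
      + ∑ j, (1 + Γ + (A.transpose - 1) * Θ) i j * d j := by
  have h1 : ∀ j, (1 + Γ + (A.transpose - 1) * Θ) i j
      = (if i = j then (1:ℝ) else 0) + Γ i j + ((∑ l, A l i * Θ l j) - Θ i j) := by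
    intro j
    simp [Matrix.add_apply, Matrix.mul_apply, Matrix.one_apply, Matrix.sub_apply,
      Matrix.transpose_apply, sub_mul, Finset.sum_sub_distrib]
  have h2 : ∑ j, (1 + Γ + (A.transpose - 1) * Θ) i j * d j
      = ∑ j, ((if i = j then (1:ℝ) else 0) + Γ i j + ((∑ l, A l i * Θ l j) - Θ i j)) * d j :=
    Finset.sum_congr rfl (fun j _ => by rw [h1 j])
  rw [h2]
  simp only [add_mul, sub_mul, Finset.sum_add_distrib, Finset.sum_sub_distrib,
    Finset.sum_ite_eq, ite_mul, one_mul, zero_mul, Finset.mem_univ, if_true, mul_add,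
    Finset.mul_sum, Finset.sum_mul]
  rw [Finset.sum_comm]
  simp only [mul_assoc]
  ring

theorem stmt16_worst_case_net_worth (n T : ℕ) (hn : 1 ≤ n) (hT : 1 ≤ T)
    (A : Matrix (Fin n) (Fin n) ℝ) (hA : ∀ i j, 0 ≤ A i j)
    (ehat : ℕ → Fin n → ℝ) (he : ∀ t, t < T → ∀ i, 0 ≤ ehat t i)
    (phat uhat : ℕ → Fin n → ℝ) (Θ Γ : ℕ → Matrix (Fin n) (Fin n) ℝ)
    (r : ℕ → Fin n → ℝ) (hr : ∀ t, t < T → ∀ j, 0 ≤ r t j)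
    (t : ℕ) (ht : t < T) (i : Fin n) :
    IsLeast {x : ℝ | ∃ d : ℕ → Fin n → ℝ, (∀ k, k < T → ∀ j, |d k j| ≤ r k j) ∧
        x = ∑ k ∈ range (t + 1),
          (ehat k i + d k i + (uhat k i + ∑ j, Γ k i j * d k j)
            + (∑ j, A j i * (phat k j + ∑ l, Θ k j l * d k l))
            - (phat k i + ∑ j, Θ k i j * d k j))}
      ((∑ k ∈ range (t + 1),
          (ehat k i + uhat k i + (∑ j, A j i * phat k j) - phat k i))
        - ∑ k ∈ range (t + 1), ∑ j,
            |(1 + Γ k + (A.transpose - 1) * Θ k) i j| * r k j) := by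
  have hmem : ∀ k, k ∈ range (t + 1) → k < T := fun k hk =>
    lt_of_le_of_lt (Nat.lt_succ_iff.mp (mem_range.mp hk)) ht
  constructor
  · -- membership: explicit worst-case disturbance attains the minimum
    set D : ℕ → Fin n → ℝ := fun k j =>
      if 0 ≤ (1 + Γ k + (A.transpose - 1) * Θ k) i j then -(r k j) else r k j with hD
    refine ⟨D, ?_, ?_⟩
    · intro k hk j
      simp only [hD]
      split_ifs <;> simp [abs_of_nonneg (hr k hk j)]
    · have hsum : ∑ k ∈ range (t + 1),
          (ehat k i + D k i + (uhat k i + ∑ j, Γ k i j * D k j)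
            + (∑ j, A j i * (phat k j + ∑ l, Θ k j l * D k l))
            - (phat k i + ∑ j, Θ k i j * D k j))
          = (∑ k ∈ range (t + 1),
              (ehat k i + uhat k i + (∑ j, A j i * phat k j) - phat k i))
            + ∑ k ∈ range (t + 1), ∑ j,
                (1 + Γ k + (A.transpose - 1) * Θ k) i j * D k j := by
        rw [← Finset.sum_add_distrib]
        exact Finset.sum_congr rfl fun k _ =>
          expand_key n A (Θ k) (Γ k) (D k) (ehat k) (uhat k) (phat k) i
      rw [hsum]
      have hval : ∑ k ∈ range (t + 1), ∑ j,
            (1 + Γ k + (A.transpose - 1) * Θ k) i j * D k j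
          = -∑ k ∈ range (t + 1), ∑ j,
              |(1 + Γ k + (A.transpose - 1) * Θ k) i j| * r k j := by
        rw [← Finset.sum_neg_distrib]
        refine Finset.sum_congr rfl fun k _ => ?_
        rw [← Finset.sum_neg_distrib]
        refine Finset.sum_congr rfl fun j _ => ?_
        simp only [hD]
        split_ifs with h
        · rw [abs_of_nonneg h]; ring
        · rw [abs_of_neg (lt_of_not_ge h)]; ring
      rw [hval, sub_eq_add_neg]
  · -- lower bound
    rintro x ⟨d, hd, rfl⟩
    rw [Finset.sum_congr rfl (fun k (_ : k ∈ range (t + 1)) => expand_key n A (Θ k) (Γ k) (d k)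
      (ehat k) (uhat k) (phat k) i), Finset.sum_add_distrib]
    have h3 : -∑ k ∈ range (t + 1), ∑ j,
          |(1 + Γ k + (A.transpose - 1) * Θ k) i j| * r k j
        ≤ ∑ k ∈ range (t + 1), ∑ j,
            (1 + Γ k + (A.transpose - 1) * Θ k) i j * d k j := by
      rw [← Finset.sum_neg_distrib]
      refine Finset.sum_le_sum fun k hk => ?_
      rw [← Finset.sum_neg_distrib]
      refine Finset.sum_le_sum fun j _ => ?_
      calc -(|(1 + Γ k + (A.transpose - 1) * Θ k) i j| * r k j)
          ≤ -(|(1 + Γ k + (A.transpose - 1) * Θ k) i j| * |d k j|) :=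
            neg_le_neg (mul_le_mul_of_nonneg_left (hd k (hmem k hk) j) (abs_nonneg _))
        _ = -|(1 + Γ k + (A.transpose - 1) * Θ k) i j * d k j| := by rw [abs_mul]
        _ ≤ (1 + Γ k + (A.transpose - 1) * Θ k) i j * d k j := neg_abs_le _
    linarith
end

section
/- In the robust pro-rata setting with affine policies p(t)=p̂(t)+Θ(t)d(t) and u(t)=û(t)+Γ(t)d(t), the worst-case cost satisfies: max over [d]∈𝒟 of J([p],[u]) = J([p̂],[û]) + Σ_{t=0}^{T−1} Σ_{j=1}^{n} |((γΓ(t) − β_tΘ(t))ᵀ1)_j| r_j(t), where J([p],[u]) = β₀·1ᵀp̄ − Σ_{t=0}^{T−1} β_t·1ᵀp(t) + γ·Σ_{t=0}^{T−1} 1ᵀu(t), and the maximum is attained. -/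
open Finset

noncomputable section

/-- The coefficient `β_t = η α^{T-t} + (1-η) a_t`, where `a_t = Σ_{j=0}^{T-t-1} α^j`. -/
def betaCoef (T : ℕ) (α η : ℝ) (t : ℕ) : ℝ :=
  η * α ^ (T - t) + (1 - η) * ∑ j ∈ Finset.range (T - t), α ^ j

theorem stmt17_worst_case_cost (n T : ℕ) (hn : 1 ≤ n) (hT : 1 ≤ T)
    (α η γ : ℝ) (hα : 1 ≤ α) (hη0 : 0 ≤ η) (hη1 : η < 1) (hγ : 0 ≤ γ)
    (pbar : Fin n → ℝ)
    (phat uhat : ℕ → Fin n → ℝ) (Θ Γ : ℕ → Matrix (Fin n) (Fin n) ℝ)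
    (r : ℕ → Fin n → ℝ) (hr : ∀ t, t < T → ∀ j, 0 ≤ r t j) :
    IsGreatest {x : ℝ | ∃ d : ℕ → Fin n → ℝ, (∀ k, k < T → ∀ j, |d k j| ≤ r k j) ∧
        x = betaCoef T α η 0 * ∑ i, pbar i
          - ∑ t ∈ range T, betaCoef T α η t * ∑ i, (phat t i + ∑ j, Θ t i j * d t j)
          + γ * ∑ t ∈ range T, ∑ i, (uhat t i + ∑ j, Γ t i j * d t j)}
      ((betaCoef T α η 0 * ∑ i, pbar i
          - ∑ t ∈ range T, betaCoef T α η t * ∑ i, phat t i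
          + γ * ∑ t ∈ range T, ∑ i, uhat t i)
        + ∑ t ∈ range T, ∑ j,
            |∑ i, (γ * Γ t i j - betaCoef T α η t * Θ t i j)| * r t j) := by
  set c : ℕ → Fin n → ℝ := fun t j => ∑ i, (γ * Γ t i j - betaCoef T α η t * Θ t i j) with hc
  set base : ℝ := betaCoef T α η 0 * ∑ i, pbar i
      - ∑ t ∈ range T, betaCoef T α η t * ∑ i, phat t i
      + γ * ∑ t ∈ range T, ∑ i, uhat t i with hbase
  have key : ∀ d : ℕ → Fin n → ℝ,
      betaCoef T α η 0 * ∑ i, pbar i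
        - ∑ t ∈ range T, betaCoef T α η t * ∑ i, (phat t i + ∑ j, Θ t i j * d t j)
        + γ * ∑ t ∈ range T, ∑ i, (uhat t i + ∑ j, Γ t i j * d t j)
      = base + ∑ t ∈ range T, ∑ j, c t j * d t j := by
    intro d
    have h1 : ∀ t, ∑ j, c t j * d t j
        = γ * (∑ i, ∑ j, Γ t i j * d t j)
          - betaCoef T α η t * (∑ i, ∑ j, Θ t i j * d t j) := by
      intro t
      calc ∑ j, c t j * d t j
          = ∑ j, ∑ i, (γ * (Γ t i j * d t j) - betaCoef T α η t * (Θ t i j * d t j)) := by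
            refine Finset.sum_congr rfl fun j _ => ?_
            rw [hc, Finset.sum_mul]
            refine Finset.sum_congr rfl fun i _ => by ring
        _ = ∑ i, ∑ j, (γ * (Γ t i j * d t j) - betaCoef T α η t * (Θ t i j * d t j)) :=
            Finset.sum_comm
        _ = _ := by
            simp [Finset.sum_sub_distrib, Finset.mul_sum]
    rw [hbase]
    simp only [Finset.sum_add_distrib, mul_add, h1, Finset.mul_sum]
    ring_nf
    rw [Finset.sum_sub_distrib]
    ring
  constructor
  · refine ⟨fun t j => if 0 ≤ c t j then r t j else -(r t j), ?_, ?_⟩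
    · intro k hk j
      by_cases h : 0 ≤ c k j <;> simp [h, abs_of_nonneg (hr k hk j)]
    · rw [key]
      congr 1
      refine Finset.sum_congr rfl fun t ht => Finset.sum_congr rfl fun j _ => ?_
      by_cases h : 0 ≤ c t j
      · rw [if_pos h, abs_of_nonneg h]
      · rw [if_neg h, abs_of_neg (lt_of_not_ge h)]; ring
  · rintro x ⟨d, hd, rfl⟩
    rw [key]
    refine add_le_add_right (Finset.sum_le_sum fun t ht => Finset.sum_le_sum fun j _ => ?_) base
    calc c t j * d t j ≤ |c t j * d t j| := le_abs_self _
      _ = |c t j| * |d t j| := abs_mul _ _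
      _ ≤ |c t j| * r t j := by
          exact mul_le_mul_of_nonneg_left (hd t (Finset.mem_range.mp ht) j) (abs_nonneg _)
end
end

section
/- In the robust pro-rata setting, a policy ([p̂],[û],[Θ],[Γ]) satisfies the robust constraints — namely, for every disturbance sequence [d]∈𝒟 and every t∈{0,…,T−1}: p(t)≥0, u(t)≥0, Σ_{k=0}^{t} α^{t−k} p(k) ≤ α^t p̄, w(t+1)≥0, and B(t)≤F(t), where p(t)=p̂(t)+Θ(t)d(t), u(t)=û(t)+Γ(t)d(t), w(t+1)=Σ_{k=0}^{t}(ê(k)+d(k)+u(k)+Aᵀp(k)−p(k)), B(t)=Σ_{τ=0}^{t} 1ᵀu(τ) — if and only if it satisfies the explicit deterministic linear constraints: for every t∈{0,…,T−1}: p̂(t)−|Θ(t)|r(t) ≥ 0; û(t)−|Γ(t)|r(t) ≥ 0; Σ_{k=0}^{t} α^{t−k}( p̂(k)+|Θ(k)|r(k) ) ≤ α^t p̄; ŵ(t+1) − Σ_{k=0}^{t} |I+Γ(k)+(Aᵀ−I)Θ(k)| r(k) ≥ 0, where ŵ(t+1)=Σ_{k=0}^{t}(ê(k)+û(k)+Aᵀp̂(k)−p̂(k));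 and Σ_{τ=0}^{t}( 1ᵀû(τ) + Σ_{j=1}^{n} |(Γ(τ)ᵀ1)_j| r_j(τ) ) ≤ F(t). -/
open Finset

lemma sign_mul_self' (x : ℝ) : Real.sign x * x = |x| := by
  rcases lt_trichotomy x 0 with h|h|h
  · rw [Real.sign_of_neg h, abs_of_neg h]; ring
  · simp [h]
  · rw [Real.sign_of_pos h, abs_of_pos h]; ring

lemma abs_sign_mul_le {x r : ℝ} (hr : 0 ≤ r) : |Real.sign x * r| ≤ r := by
  rw [abs_mul, abs_of_nonneg hr]
  rcases lt_trichotomy x 0 with h|h|h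
  · simp [Real.sign_of_neg h]
  · simp [h, hr]
  · simp [Real.sign_of_pos h]

lemma dot_le {n : ℕ} (c d r : Fin n → ℝ) (h : ∀ j, |d j| ≤ r j) :
    ∑ j, c j * d j ≤ ∑ j, |c j| * r j := by
  calc ∑ j, c j * d j ≤ ∑ j, |c j * d j| :=
        Finset.sum_le_sum fun j _ => le_abs_self _
    _ = ∑ j, |c j| * |d j| := by simp [abs_mul]
    _ ≤ ∑ j, |c j| * r j :=
        Finset.sum_le_sum fun j _ => mul_le_mul_of_nonneg_left (h j) (abs_nonneg _)

lemma dot_ge {n : ℕ} (c d r : Fin n → ℝ) (h : ∀ j, |d j| ≤ r j) :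
    -∑ j, |c j| * r j ≤ ∑ j, c j * d j := by
  have := dot_le c (fun j => -d j) r (fun j => by simpa using h j)
  simp only [mul_neg, Finset.sum_neg_distrib] at this
  linarith

lemma dot_sign {n : ℕ} (c r : Fin n → ℝ) :
    ∑ j, c j * (Real.sign (c j) * r j) = ∑ j, |c j| * r j :=
  Finset.sum_congr rfl fun j _ => by rw [← mul_assoc, mul_comm (c j), sign_mul_self']

lemma dot_neg_sign {n : ℕ} (c r : Fin n → ℝ) :
    ∑ j, c j * (-Real.sign (c j) * r j) = -∑ j, |c j| * r j := by
  rw [← dot_sign c r, ← Finset.sum_neg_distrib]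
  exact Finset.sum_congr rfl fun j _ => by ring

lemma expand4 {n : ℕ} (A Γk Θk : Matrix (Fin n) (Fin n) ℝ)
    (e u p d : Fin n → ℝ) (i : Fin n) :
    e i + d i + (u i + ∑ j, Γk i j * d j)
      + (∑ j, A j i * (p j + ∑ l, Θk j l * d l))
      - (p i + ∑ j, Θk i j * d j)
    = (e i + u i + (∑ j, A j i * p j) - p i)
      + ∑ j, (1 + Γk + (A.transpose - 1) * Θk) i j * d j := by
  simp only [Matrix.add_apply, Matrix.sub_apply, Matrix.mul_apply, Matrix.one_apply,
    Matrix.transpose_apply, add_mul, sub_mul, ite_mul, one_mul, zero_mul,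
    Finset.sum_add_distrib, Finset.sum_sub_distrib, Finset.sum_ite_eq, Finset.mem_univ,
    if_true, Finset.mul_sum, Finset.sum_mul]
  have : ∑ j, A j i * (p j + ∑ l, Θk j l * d l)
      = (∑ j, A j i * p j) + ∑ j, ∑ l, A j i * Θk j l * d l := by
    simp [mul_add, Finset.sum_add_distrib, Finset.mul_sum, mul_assoc]
  rw [this, Finset.sum_comm (s := univ) (t := univ) (f := fun j l => A j i * Θk j l * d l)]
  ring

lemma swap5 {n : ℕ} (Γτ : Matrix (Fin n) (Fin n) ℝ) (u d : Fin n → ℝ) :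
    ∑ i, (u i + ∑ j, Γτ i j * d j) = (∑ i, u i) + ∑ j, (∑ i, Γτ i j) * d j := by
  simp only [Finset.sum_add_distrib, Finset.sum_mul]
  rw [Finset.sum_comm]

theorem stmt18_robust_constraints_equiv (n T : ℕ) (hn : 1 ≤ n) (hT : 1 ≤ T)
    (α : ℝ) (hα : 1 ≤ α)
    (pbar : Fin n → ℝ) (hpbar : ∀ i, 0 ≤ pbar i)
    (A : Matrix (Fin n) (Fin n) ℝ) (hA : ∀ i j, 0 ≤ A i j)
    (ehat : ℕ → Fin n → ℝ) (he : ∀ t, t < T → ∀ i, 0 ≤ ehat t i)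
    (F : ℕ → ℝ) (hF : ∀ t, 0 ≤ F t) (hFmono : ∀ s t, s ≤ t → F s ≤ F t)
    (r : ℕ → Fin n → ℝ) (hr : ∀ t, t < T → ∀ j, 0 ≤ r t j)
    (phat uhat : ℕ → Fin n → ℝ) (Θ Γ : ℕ → Matrix (Fin n) (Fin n) ℝ) :
    (∀ d : ℕ → Fin n → ℝ, (∀ k, k < T → ∀ j, |d k j| ≤ r k j) →
      ∀ t, t < T →
        (∀ i, 0 ≤ phat t i + ∑ j, Θ t i j * d t j) ∧
        (∀ i, 0 ≤ uhat t i + ∑ j, Γ t i j * d t j) ∧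
        (∀ i, ∑ k ∈ range (t + 1),
            α ^ (t - k) * (phat k i + ∑ j, Θ k i j * d k j) ≤ α ^ t * pbar i) ∧
        (∀ i, 0 ≤ ∑ k ∈ range (t + 1),
            (ehat k i + d k i + (uhat k i + ∑ j, Γ k i j * d k j)
              + (∑ j, A j i * (phat k j + ∑ l, Θ k j l * d k l))
              - (phat k i + ∑ j, Θ k i j * d k j))) ∧
        (∑ τ ∈ range (t + 1), ∑ i, (uhat τ i + ∑ j, Γ τ i j * d τ j) ≤ F t))
    ↔
    (∀ t, t < T →
      (∀ i, 0 ≤ phat t i - ∑ j, |Θ t i j| * r t j) ∧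
      (∀ i, 0 ≤ uhat t i - ∑ j, |Γ t i j| * r t j) ∧
      (∀ i, ∑ k ∈ range (t + 1),
          α ^ (t - k) * (phat k i + ∑ j, |Θ k i j| * r k j) ≤ α ^ t * pbar i) ∧
      (∀ i, 0 ≤ (∑ k ∈ range (t + 1),
            (ehat k i + uhat k i + (∑ j, A j i * phat k j) - phat k i))
          - ∑ k ∈ range (t + 1), ∑ j,
              |(1 + Γ k + (A.transpose - 1) * Θ k) i j| * r k j) ∧
      (∑ τ ∈ range (t + 1), ((∑ i, uhat τ i) + ∑ j, |∑ i, Γ τ i j| * r τ j) ≤ F t)) := by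
  constructor
  · intro h t ht
    refine ⟨?_, ?_, ?_, ?_, ?_⟩
    · -- p(t) ≥ 0
      intro i
      set d : ℕ → Fin n → ℝ := fun k j => -Real.sign (Θ k i j) * r k j with hd
      have hdb : ∀ k, k < T → ∀ j, |d k j| ≤ r k j := fun k hk j => by
        simp only [hd, neg_mul, abs_neg]
        exact abs_sign_mul_le (hr k hk j)
      have h1 := (h d hdb t ht).1 i
      simp only [hd] at h1
      rw [dot_neg_sign (fun j => Θ t i j) (r t)] at h1
      linarith
    · -- u(t) ≥ 0
      intro i
      set d : ℕ → Fin n → ℝ := fun k j => -Real.sign (Γ k i j) * r k j with hd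
      have hdb : ∀ k, k < T → ∀ j, |d k j| ≤ r k j := fun k hk j => by
        simp only [hd, neg_mul, abs_neg]
        exact abs_sign_mul_le (hr k hk j)
      have h1 := (h d hdb t ht).2.1 i
      simp only [hd] at h1
      rw [dot_neg_sign (fun j => Γ t i j) (r t)] at h1
      linarith
    · -- cumulative payment bound
      intro i
      set d : ℕ → Fin n → ℝ := fun k j => Real.sign (Θ k i j) * r k j with hd
      have hdb : ∀ k, k < T → ∀ j, |d k j| ≤ r k j := fun k hk j => by
        simp only [hd]
        exact abs_sign_mul_le (hr k hk j)
      have h1 := (h d hdb t ht).2.2.1 i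
      simp only [hd] at h1
      calc ∑ k ∈ range (t + 1), α ^ (t - k) * (phat k i + ∑ j, |Θ k i j| * r k j)
          = ∑ k ∈ range (t + 1),
              α ^ (t - k) * (phat k i + ∑ j, Θ k i j * (Real.sign (Θ k i j) * r k j)) :=
            Finset.sum_congr rfl fun k _ => by
              rw [dot_sign (fun j => Θ k i j) (r k)]
        _ ≤ α ^ t * pbar i := h1
    · -- wealth nonnegativity
      intro i
      set d : ℕ → Fin n → ℝ :=
        fun k j => -Real.sign ((1 + Γ k + (A.transpose - 1) * Θ k) i j) * r k j with hd
      have hdb : ∀ k, k < T → ∀ j, |d k j| ≤ r k j := fun k hk j => by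
        simp only [hd, neg_mul, abs_neg]
        exact abs_sign_mul_le (hr k hk j)
      have h1 := (h d hdb t ht).2.2.2.1 i
      have key : ∑ k ∈ range (t + 1),
            (ehat k i + d k i + (uhat k i + ∑ j, Γ k i j * d k j)
              + (∑ j, A j i * (phat k j + ∑ l, Θ k j l * d k l))
              - (phat k i + ∑ j, Θ k i j * d k j))
          = (∑ k ∈ range (t + 1),
              (ehat k i + uhat k i + (∑ j, A j i * phat k j) - phat k i))
            - ∑ k ∈ range (t + 1), ∑ j,
                |(1 + Γ k + (A.transpose - 1) * Θ k) i j| * r k j := by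
        rw [← Finset.sum_sub_distrib]
        refine Finset.sum_congr rfl fun k _ => ?_
        rw [expand4 A (Γ k) (Θ k) (ehat k) (uhat k) (phat k) (d k) i]
        have : ∑ j, (1 + Γ k + (A.transpose - 1) * Θ k) i j * d k j
            = -∑ j, |(1 + Γ k + (A.transpose - 1) * Θ k) i j| * r k j := by
          simp only [hd]
          exact dot_neg_sign (fun j => (1 + Γ k + (A.transpose - 1) * Θ k) i j) (r k)
        rw [this]; ring
      rw [key] at h1
      exact h1
    · -- budget
      set d : ℕ → Fin n → ℝ := fun k j => Real.sign (∑ i, Γ k i j) * r k j with hd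
      have hdb : ∀ k, k < T → ∀ j, |d k j| ≤ r k j := fun k hk j => by
        simp only [hd]
        exact abs_sign_mul_le (hr k hk j)
      have h1 := (h d hdb t ht).2.2.2.2
      calc ∑ τ ∈ range (t + 1), ((∑ i, uhat τ i) + ∑ j, |∑ i, Γ τ i j| * r τ j)
          = ∑ τ ∈ range (t + 1), ∑ i, (uhat τ i + ∑ j, Γ τ i j * d τ j) := by
            refine Finset.sum_congr rfl fun τ _ => ?_
            rw [swap5]
            simp only [hd]
            rw [dot_sign (fun j => ∑ i, Γ τ i j) (r τ)]
        _ ≤ F t := h1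
  · intro h d hd t ht
    obtain ⟨c1, c2, c3, c4, c5⟩ := h t ht
    have hkT : ∀ k, k ∈ range (t + 1) → k < T := fun k hk => by
      have := mem_range.mp hk; omega
    refine ⟨?_, ?_, ?_, ?_, ?_⟩
    · intro i
      have := dot_ge (fun j => Θ t i j) (d t) (r t) (hd t ht)
      have := c1 i
      linarith
    · intro i
      have := dot_ge (fun j => Γ t i j) (d t) (r t) (hd t ht)
      have := c2 i
      linarith
    · intro i
      calc ∑ k ∈ range (t + 1), α ^ (t - k) * (phat k i + ∑ j, Θ k i j * d k j)
          ≤ ∑ k ∈ range (t + 1), α ^ (t - k) * (phat k i + ∑ j, |Θ k i j| * r k j) := by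
            refine Finset.sum_le_sum fun k hk => ?_
            refine mul_le_mul_of_nonneg_left ?_ (pow_nonneg (by linarith) _)
            have := dot_le (fun j => Θ k i j) (d k) (r k) (hd k (hkT k hk))
            linarith
        _ ≤ α ^ t * pbar i := c3 i
    · intro i
      have step : ∑ k ∈ range (t + 1),
            ((ehat k i + uhat k i + (∑ j, A j i * phat k j) - phat k i)
              - ∑ j, |(1 + Γ k + (A.transpose - 1) * Θ k) i j| * r k j)
          ≤ ∑ k ∈ range (t + 1),
            (ehat k i + d k i + (uhat k i + ∑ j, Γ k i j * d k j)
              + (∑ j, A j i * (phat k j + ∑ l, Θ k j l * d k l))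
              - (phat k i + ∑ j, Θ k i j * d k j)) := by
        refine Finset.sum_le_sum fun k hk => ?_
        rw [expand4 A (Γ k) (Θ k) (ehat k) (uhat k) (phat k) (d k) i]
        have := dot_ge (fun j => (1 + Γ k + (A.transpose - 1) * Θ k) i j) (d k) (r k)
          (hd k (hkT k hk))
        linarith
      have c4' := c4 i
      rw [← Finset.sum_sub_distrib] at c4'
      linarith
    · calc ∑ τ ∈ range (t + 1), ∑ i, (uhat τ i + ∑ j, Γ τ i j * d τ j)
          ≤ ∑ τ ∈ range (t + 1), ((∑ i, uhat τ i) + ∑ j, |∑ i, Γ τ i j| * r τ j) := by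
            refine Finset.sum_le_sum fun τ hτ => ?_
            rw [swap5]
            have := dot_le (fun j => ∑ i, Γ τ i j) (d τ) (r τ) (hd τ (hkT τ hτ))
            linarith
        _ ≤ F t := c5
end
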